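/- arXiv:1612.02884 — 3 statements merged into one kernel-verified Lean document; each statement's English description precedes it below -/
import Mathlib

section
/- Let (δ₁,…,δ_k) be a minimal transitive factorization of σ ∈ S_n into 3-cycles, write δ₁ = (j₃ j₂ j₁) and σ' = δ₂⋯δ_k = δ₁⁻¹σ. Suppose j₂ and j₃ lie in a common cycle of σ and j₁ lies in a different cycle of σ (with σ of the form (j₁…)(j₂…j₃…)⋯). Then: in σ' the points j₁ and j₂ lie in a common cycle and j₃ lies in a different cycle; the subgroup generated by {δ₂,…,δ_k} has exactly two orbits on {1,…,n}, one containing j₁ and j₂ and the other containing j₃; and for each of these two orbits X, the sub-tuple of (δ₂,…,δ_k) consisting of those δᵢ that move some point of X is (after restriction to X) a minimal transitive factorization of the restriction of σ' to X into 3-cycles of the symmetric group on X. -/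
open Equiv

open scoped Classical

/-- The subgroup generated by the entries of `L` acts transitively on `Fin n`. -/
def IsTransitiveFamily {n : ℕ} (L : List (Perm (Fin n))) : Prop :=
  ∀ x y : Fin n, ∃ g ∈ Subgroup.closure {τ | τ ∈ L}, g x = y

/-- `L` is a transitive factorization of `σ` into 3-cycles. -/
def IsTransFact3 {n : ℕ} (σ : Perm (Fin n)) (L : List (Perm (Fin n))) : Prop :=
  (∀ δ ∈ L, δ.IsThreeCycle) ∧ L.prod = σ ∧ IsTransitiveFamily L

/-- `L` is a minimal transitive factorization of `σ` into 3-cycles. -/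
def IsMinTransFact3 {n : ℕ} (σ : Perm (Fin n)) (L : List (Perm (Fin n))) : Prop :=
  IsTransFact3 σ L ∧ ∀ L' : List (Perm (Fin n)), IsTransFact3 σ L' → L.length ≤ L'.length

/-- The orbit of `x` under the subgroup generated by the entries of `L`. -/
def grpOrbit {n : ℕ} (L : List (Perm (Fin n))) (x : Fin n) : Set (Fin n) :=
  {y | ∃ g ∈ Subgroup.closure {τ | τ ∈ L}, g x = y}

/-- `L` is, after restriction to the invariant set `X`, a transitive factorization of the
restriction of `σ` to `X` into 3-cycles of the symmetric group on `X`. -/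
def IsTransFact3On {n : ℕ} (X : Set (Fin n)) (σ : Perm (Fin n))
    (L : List (Perm (Fin n))) : Prop :=
  (∀ δ ∈ L, δ.IsThreeCycle ∧ ∀ y, δ y ≠ y → y ∈ X) ∧
  (∀ y ∈ X, L.prod y = σ y) ∧
  (∀ x ∈ X, ∀ y ∈ X, ∃ g ∈ Subgroup.closure {τ | τ ∈ L}, g x = y)

/-- Minimal version of `IsTransFact3On`. -/
def IsMinTransFact3On {n : ℕ} (X : Set (Fin n)) (σ : Perm (Fin n))
    (L : List (Perm (Fin n))) : Prop :=
  IsTransFact3On X σ L ∧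
  ∀ M : List (Perm (Fin n)), IsTransFact3On X σ M → L.length ≤ M.length

namespace MinFact3

open Equiv.Perm

variable {n : ℕ}


/-- The orbit equivalence relation generated by a set of permutations. -/
def orel (S : Set (Perm (Fin n))) (x y : Fin n) : Prop :=
  ∃ g ∈ Subgroup.closure S, g x = y

theorem orel_refl (S : Set (Perm (Fin n))) (x : Fin n) : orel S x x :=
  ⟨1, one_mem _, rfl⟩

theorem orel_symm {S : Set (Perm (Fin n))} {x y : Fin n} (h : orel S x y) : orel S y x := by
  obtain ⟨g, hg, rfl⟩ := h
  exact ⟨g⁻¹, inv_mem hg, by simp⟩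

theorem orel_trans {S : Set (Perm (Fin n))} {x y z : Fin n}
    (h : orel S x y) (h' : orel S y z) : orel S x z := by
  obtain ⟨g, hg, rfl⟩ := h
  obtain ⟨g', hg', rfl⟩ := h'
  exact ⟨g' * g, mul_mem hg' hg, rfl⟩

theorem orel_equivalence (S : Set (Perm (Fin n))) : Equivalence (orel S) :=
  ⟨orel_refl S, orel_symm, orel_trans⟩

/-- Closure induction: if an equivalence relation is preserved by generators, every element
of the closure moves points within their classes. -/
theorem closure_pres {S : Set (Perm (Fin n))} {e : Fin n → Fin n → Prop}
    (he : Equivalence e) (h : ∀ g ∈ S, ∀ x, e x (g x)) :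
    ∀ g ∈ Subgroup.closure S, ∀ x, e x (g x) := by
  intro g hg
  induction hg using Subgroup.closure_induction with
  | mem τ hτ => exact h τ hτ
  | one => intro x; simpa using he.refl x
  | mul a b ha hb iha ihb =>
    intro x
    have h1 := ihb x
    have h2 := iha (b x)
    simpa [Perm.mul_apply] using he.trans h1 h2
  | inv a ha iha =>
    intro x
    have := iha (a⁻¹ x)
    rw [show a (a⁻¹ x) = x from a.apply_symm_apply x] at this
    exact he.symm this

theorem sameCycle_imp {ρ : Perm (Fin n)} {e : Fin n → Fin n → Prop}
    (he : Equivalence e) (h : ∀ x, e x (ρ x)) {a b : Fin n}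
    (hab : ρ.SameCycle a b) : e a b := by
  obtain ⟨i, rfl⟩ := hab
  have hmem : ρ ∈ Subgroup.closure ({ρ} : Set (Perm (Fin n))) :=
    Subgroup.subset_closure rfl
  have hgen : ∀ g ∈ ({ρ} : Set (Perm (Fin n))), ∀ x, e x (g x) := by
    rintro g rfl x; exact h x
  exact closure_pres he hgen (ρ ^ i) (zpow_mem hmem i) a

/-- An element of the closure of the entries of a list moves points within their orbits. -/
theorem orel_apply {S : Set (Perm (Fin n))} {g : Perm (Fin n)}
    (hg : g ∈ Subgroup.closure S) (x : Fin n) : orel S x (g x) :=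
  ⟨g, hg, rfl⟩



section SwapCycle

variable {ρ : Perm (Fin n)} {x y : Fin n}

/-- Join: multiplying by a transposition of two points in different cycles puts them in
a common cycle. -/
theorem sameCycle_swap_mul (hxy : x ≠ y) (h : ¬ ρ.SameCycle x y) :
    (Equiv.swap x y * ρ).SameCycle y x := by
  set ρ' := Equiv.swap x y * ρ with hρ'
  set m := Function.minimalPeriod ρ y with hm
  have hper : Function.IsPeriodicPt ρ (orderOf ρ) y := by
    rw [Function.IsPeriodicPt, Function.IsFixedPt, ← Equiv.Perm.coe_pow, pow_orderOf_eq_one]; rfl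
  have hmpos : 0 < m := hper.minimalPeriod_pos (orderOf_pos ρ)
  have key : ∀ k, k < m → (ρ' ^ k) y = (ρ ^ k) y := by
    intro k
    induction k with
    | zero => intro _; simp
    | succ k ih =>
      intro hk
      have hk' : k < m := Nat.lt_of_succ_lt hk
      have h1 : (ρ' ^ (k+1)) y = ρ' ((ρ' ^ k) y) := by
        rw [pow_succ', Perm.mul_apply]
      rw [h1, ih hk']
      have h2 : ρ' ((ρ ^ k) y) = Equiv.swap x y (ρ ((ρ ^ k) y)) := rfl
      have h3 : ρ ((ρ ^ k) y) = (ρ ^ (k+1)) y := by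
        rw [pow_succ', Perm.mul_apply]
      rw [h2, h3]
      have hne1 : (ρ ^ (k+1)) y ≠ x := by
        intro hx
        exact h (Perm.SameCycle.symm ⟨(k+1 : ℕ), by rw [zpow_natCast]; exact hx⟩)
      have hne2 : (ρ ^ (k+1)) y ≠ y := by
        intro hy
        have : Function.IsPeriodicPt ρ (k+1) y := by
          rw [Function.IsPeriodicPt, Function.IsFixedPt, ← Equiv.Perm.coe_pow]; exact hy
        exact absurd (this.minimalPeriod_le (Nat.succ_pos k)) (by omega)
      rw [Equiv.swap_apply_of_ne_of_ne hne1 hne2]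
  have hfin : (ρ' ^ m) y = x := by
    obtain ⟨m', hm'⟩ : ∃ m', m = m' + 1 := ⟨m - 1, by omega⟩
    rw [hm']
    have h1 : (ρ' ^ (m'+1)) y = ρ' ((ρ' ^ m') y) := by
      rw [pow_succ', Perm.mul_apply]
    rw [h1, key m' (by omega)]
    have h3 : ρ ((ρ ^ m') y) = (ρ ^ (m'+1)) y := by rw [pow_succ', Perm.mul_apply]
    have h4 : (ρ ^ (m'+1)) y = y := by
      rw [← hm']
      exact Function.isPeriodicPt_minimalPeriod ρ y
    show Equiv.swap x y (ρ ((ρ ^ m') y)) = x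
    rw [h3, h4, Equiv.swap_apply_right]
  exact ⟨(m : ℤ), by rw [zpow_natCast]; exact hfin⟩

/-- Cut: multiplying by a transposition of two points in a common cycle separates them. -/
theorem not_sameCycle_swap_mul (hxy : x ≠ y) (h : ρ.SameCycle x y) :
    ¬ (Equiv.swap x y * ρ).SameCycle x y := by
  set ρ' := Equiv.swap x y * ρ with hρ'
  obtain ⟨t₀, ht₀pos, _, ht₀⟩ := h.exists_pow_eq''
  have hex : ∃ t, 0 < t ∧ (ρ ^ t) x = y := ⟨t₀, ht₀pos, ht₀⟩
  classical
  set t := Nat.find hex with ht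
  obtain ⟨htpos, htx⟩ : 0 < t ∧ (ρ ^ t) x = y := Nat.find_spec hex
  have hmin : ∀ k, k < t → ¬ (0 < k ∧ (ρ ^ k) x = y) := fun k hk => Nat.find_min hex hk
  have key : ∀ k, k < t → (ρ' ^ k) x = (ρ ^ k) x := by
    intro k
    induction k with
    | zero => intro _; simp
    | succ k ih =>
      intro hk
      have hk' : k < t := Nat.lt_of_succ_lt hk
      have h1 : (ρ' ^ (k+1)) x = ρ' ((ρ' ^ k) x) := by rw [pow_succ', Perm.mul_apply]
      rw [h1, ih hk']
      have h3 : ρ ((ρ ^ k) x) = (ρ ^ (k+1)) x := by rw [pow_succ', Perm.mul_apply]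
      show Equiv.swap x y (ρ ((ρ ^ k) x)) = (ρ ^ (k+1)) x
      rw [h3]
      have hne2 : (ρ ^ (k+1)) x ≠ y := fun hy => hmin (k+1) hk ⟨Nat.succ_pos k, hy⟩
      have hne1 : (ρ ^ (k+1)) x ≠ x := by
        intro hhx
        have h5 : (ρ ^ (t - (k+1))) x = y := by
          have : (ρ ^ (t - (k+1))) ((ρ ^ (k+1)) x) = (ρ ^ t) x := by
            rw [← Perm.mul_apply, ← pow_add]
            congr 2
            omega
          rw [hhx] at this
          rw [this, htx]
        have hlt : t - (k+1) < t := by omega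
        have hpos : 0 < t - (k+1) := by
          rcases Nat.eq_zero_or_pos (t - (k+1)) with h0 | h0
          · exfalso
            rw [h0, pow_zero] at h5
            exact hxy h5
          · exact h0
        exact hmin _ hlt ⟨hpos, h5⟩
      rw [Equiv.swap_apply_of_ne_of_ne hne1 hne2]
  have hcyc : (ρ' ^ t) x = x := by
    obtain ⟨t', ht'⟩ : ∃ t', t = t' + 1 := ⟨t - 1, by omega⟩
    rw [ht']
    have h1 : (ρ' ^ (t'+1)) x = ρ' ((ρ' ^ t') x) := by rw [pow_succ', Perm.mul_apply]
    rw [h1, key t' (by omega)]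
    have h3 : ρ ((ρ ^ t') x) = (ρ ^ (t'+1)) x := by rw [pow_succ', Perm.mul_apply]
    show Equiv.swap x y (ρ ((ρ ^ t') x)) = x
    rw [h3, ← ht', htx, Equiv.swap_apply_right]
  rintro ⟨i, hi⟩
  -- reduce the integer power mod t
  have hmod : (ρ' ^ i) x = (ρ' ^ ((i % (t : ℤ)).toNat)) x := by
    have hsplit : i = i % (t : ℤ) + (t : ℤ) * (i / (t : ℤ)) := (Int.emod_add_mul_ediv i t).symm
    have hfix : ∀ q : ℤ, ((ρ' ^ (t : ℤ)) ^ q) x = x := by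
      intro q
      have hbase : (ρ' ^ (t : ℤ)) x = x := by rw [zpow_natCast]; exact hcyc
      exact Equiv.Perm.zpow_apply_eq_self_of_apply_eq_self hbase q
    calc (ρ' ^ i) x = (ρ' ^ (i % (t : ℤ) + (t : ℤ) * (i / (t : ℤ)))) x := by rw [← hsplit]
      _ = (ρ' ^ (i % (t : ℤ))) ((ρ' ^ ((t : ℤ) * (i / (t : ℤ)))) x) := by
          rw [zpow_add, Perm.mul_apply]
      _ = (ρ' ^ (i % (t : ℤ))) x := by
          rw [zpow_mul]
          rw [hfix (i / (t : ℤ))]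
      _ = (ρ' ^ ((i % (t : ℤ)).toNat)) x := by
          rw [← zpow_natCast]
          congr 1
          rw [Int.toNat_of_nonneg (Int.emod_nonneg i (by exact_mod_cast htpos.ne'))]
  rw [hi] at hmod
  set r := (i % (t : ℤ)).toNat with hr
  have hrlt : r < t := by
    have h1 : i % (t : ℤ) < (t : ℤ) := Int.emod_lt_of_pos i (by exact_mod_cast htpos)
    omega
  have : (ρ' ^ r) x = (ρ ^ r) x := key r hrlt
  rw [← hmod] at this
  rcases Nat.eq_zero_or_pos r with h0 | h0
  · rw [h0, pow_zero] at this
    exact hxy this.symm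
  · exact hmin r hrlt ⟨h0, this.symm⟩

/-- After a join, the old cycles refine the new ones. -/
theorem sameCycle_mono_swap_mul (hj : (Equiv.swap x y * ρ).SameCycle x y)
    {a b : Fin n} (hab : ρ.SameCycle a b) : (Equiv.swap x y * ρ).SameCycle a b := by
  set ρ' := Equiv.swap x y * ρ with hρ'
  have step : ∀ z, ρ'.SameCycle z (ρ z) := by
    intro z
    have hz : ρ z = Equiv.swap x y (ρ' z) := by
      simp [hρ', Perm.mul_apply, Equiv.swap_apply_self]
    rcases eq_or_ne (ρ' z) x with h1 | h1
    · rw [hz, h1, Equiv.swap_apply_left]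
      exact Perm.SameCycle.trans ⟨1, by simp [h1]⟩ hj
    rcases eq_or_ne (ρ' z) y with h2 | h2
    · rw [hz, h2, Equiv.swap_apply_right]
      exact Perm.SameCycle.trans ⟨1, by simp [h2]⟩ hj.symm
    · rw [hz, Equiv.swap_apply_of_ne_of_ne h1 h2]
      exact ⟨1, by simp⟩
  obtain ⟨k, -, hk⟩ := hab.exists_pow_eq'
  subst hk
  clear hab
  induction k with
  | zero => exact ⟨0, by simp⟩
  | succ k ih =>
    have h1 : (ρ ^ (k+1)) a = ρ ((ρ ^ k) a) := by rw [pow_succ', Perm.mul_apply]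
    rw [h1]
    exact ih.trans (step ((ρ ^ k) a))

end SwapCycle

/-- Cycles of `swap x y * ρ` refine cycles of `ρ` merged along the classes of `x, y`. -/
theorem sameCycle_swap_mul_refine (ρ : Perm (Fin n)) (x y : Fin n) {a b : Fin n}
    (h : (Equiv.swap x y * ρ).SameCycle a b) :
    ρ.SameCycle a b ∨ ((ρ.SameCycle a x ∨ ρ.SameCycle a y) ∧
      (ρ.SameCycle b x ∨ ρ.SameCycle b y)) := by
  set e : Fin n → Fin n → Prop := fun u v =>
    ρ.SameCycle u v ∨ ((ρ.SameCycle u x ∨ ρ.SameCycle u y) ∧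
      (ρ.SameCycle v x ∨ ρ.SameCycle v y)) with he_def
  have he : Equivalence e := by
    constructor
    · intro u; exact Or.inl (Perm.SameCycle.refl ρ u)
    · rintro u v (huv | ⟨hu, hv⟩)
      · exact Or.inl huv.symm
      · exact Or.inr ⟨hv, hu⟩
    · rintro u v w (huv | ⟨hu, hv⟩) (hvw | ⟨hv', hw⟩)
      · exact Or.inl (huv.trans hvw)
      · exact Or.inr ⟨hv'.imp (fun hh => (huv.trans hh)) (fun hh => (huv.trans hh)), hw⟩
      · refine Or.inr ⟨hu, hv.imp (fun hh => hvw.symm.trans hh) (fun hh => hvw.symm.trans hh)⟩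
      · exact Or.inr ⟨hu, hw⟩
  have hstep : ∀ z, e z ((Equiv.swap x y * ρ) z) := by
    intro z
    have hz : (Equiv.swap x y * ρ) z = Equiv.swap x y (ρ z) := rfl
    rcases eq_or_ne (ρ z) x with h1 | h1
    · rw [hz, h1, Equiv.swap_apply_left]
      exact Or.inr ⟨Or.inl ⟨1, by simp [h1]⟩, Or.inr (Perm.SameCycle.refl ρ y)⟩
    rcases eq_or_ne (ρ z) y with h2 | h2
    · rw [hz, h2, Equiv.swap_apply_right]
      exact Or.inr ⟨Or.inr ⟨1, by simp [h2]⟩, Or.inl (Perm.SameCycle.refl ρ x)⟩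
    · rw [hz, Equiv.swap_apply_of_ne_of_ne h1 h2]
      exact Or.inl ⟨1, by simp⟩
  exact sameCycle_imp he hstep h

/-- The setoid of cycles of a permutation. -/
def cycS (ρ : Perm (Fin n)) : Setoid (Fin n) :=
  ⟨ρ.SameCycle, ⟨fun u => Perm.SameCycle.refl ρ u, Perm.SameCycle.symm, Perm.SameCycle.trans⟩⟩

/-- The number of cycles (counting fixed points) of a permutation. -/
noncomputable def cCount (ρ : Perm (Fin n)) : ℕ := Nat.card (Quotient (cycS ρ))

theorem cCount_one : cCount (1 : Perm (Fin n)) = n := by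
  have hf : Function.Bijective (fun q : Quotient (cycS (1 : Perm (Fin n))) =>
      Quotient.lift (id : Fin n → Fin n)
        (fun a b hab => by
          have : (1 : Perm (Fin n)).SameCycle a b := hab
          simpa using this) q) := by
    constructor
    · intro q q'
      induction q using Quotient.ind with | _ a =>
      induction q' using Quotient.ind with | _ b =>
      intro hab
      simp only [Quotient.lift_mk, id] at hab
      subst hab
      rfl
    · intro z; exact ⟨Quotient.mk _ z, rfl⟩
  have := Nat.card_congr (Equiv.ofBijective _ hf)
  simpa [cCount] using this

theorem cCount_pos (ρ : Perm (Fin n)) (hn : 0 < n) : 0 < cCount ρ := by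
  have : Nonempty (Fin n) := ⟨⟨0, hn⟩⟩
  have : Nonempty (Quotient (cycS ρ)) := ⟨Quotient.mk _ (Classical.arbitrary _)⟩
  exact Nat.card_pos

/-- Exact join: joining two distinct cycles decreases the cycle count by one. -/
theorem cCount_join {ρ : Perm (Fin n)} {x y : Fin n} (hxy : x ≠ y)
    (h : ¬ ρ.SameCycle x y) : cCount (Equiv.swap x y * ρ) + 1 = cCount ρ := by
  set ρ' := Equiv.swap x y * ρ with hρ'
  have hj : ρ'.SameCycle x y := (sameCycle_swap_mul hxy h).symm
  -- the map from new cycles to old cycles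
  have hfresp : ∀ a b : Fin n, (cycS ρ').r a b →
      (if ρ.SameCycle a y then (Quotient.mk (cycS ρ) x) else Quotient.mk (cycS ρ) a) =
      (if ρ.SameCycle b y then (Quotient.mk (cycS ρ) x) else Quotient.mk (cycS ρ) b) := by
    intro a b hab
    rcases sameCycle_swap_mul_refine ρ x y hab with hab' | ⟨ha, hb⟩
    · by_cases hay : ρ.SameCycle a y
      · rw [if_pos hay, if_pos (hab'.symm.trans hay)]
      · rw [if_neg hay, if_neg (fun hby => hay (hab'.trans hby))]
        exact Quotient.sound hab'
    · have hA : (if ρ.SameCycle a y then (Quotient.mk (cycS ρ) x) else Quotient.mk (cycS ρ) a)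
          = Quotient.mk (cycS ρ) x := by
        rcases ha with hax | hay
        · by_cases hay : ρ.SameCycle a y
          · rw [if_pos hay]
          · rw [if_neg hay]; exact Quotient.sound hax
        · rw [if_pos hay]
      have hB : (if ρ.SameCycle b y then (Quotient.mk (cycS ρ) x) else Quotient.mk (cycS ρ) b)
          = Quotient.mk (cycS ρ) x := by
        rcases hb with hbx | hby
        · by_cases hby : ρ.SameCycle b y
          · rw [if_pos hby]
          · rw [if_neg hby]; exact Quotient.sound hbx
        · rw [if_pos hby]
      rw [hA, hB]
  set φ : Quotient (cycS ρ') → Quotient (cycS ρ) :=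
    Quotient.lift (fun a => if ρ.SameCycle a y then (Quotient.mk (cycS ρ) x)
      else Quotient.mk (cycS ρ) a) hfresp with hφ
  have hφmk : ∀ a : Fin n, φ (Quotient.mk _ a) = if ρ.SameCycle a y
      then (Quotient.mk (cycS ρ) x) else Quotient.mk (cycS ρ) a := fun a => rfl
  have hφinj : Function.Injective φ := by
    intro q q'
    induction q using Quotient.ind with | _ a =>
    induction q' using Quotient.ind with | _ b =>
    intro hab
    rw [hφmk, hφmk] at hab
    apply Quotient.sound
    show ρ'.SameCycle a b
    by_cases hay : ρ.SameCycle a y <;> by_cases hby : ρ.SameCycle b y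
    · exact sameCycle_mono_swap_mul hj (hay.trans hby.symm)
    · rw [if_pos hay, if_neg hby] at hab
      have hxb : ρ.SameCycle x b := Quotient.exact hab
      exact ((sameCycle_mono_swap_mul hj hay).trans hj.symm).trans
        (sameCycle_mono_swap_mul hj hxb)
    · rw [if_neg hay, if_pos hby] at hab
      have hax : ρ.SameCycle a x := Quotient.exact hab
      exact ((sameCycle_mono_swap_mul hj hax).trans hj).trans
        (sameCycle_mono_swap_mul hj hby.symm)
    · rw [if_neg hay, if_neg hby] at hab
      exact sameCycle_mono_swap_mul hj (Quotient.exact hab)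
  have hφy : ∀ q, φ q ≠ Quotient.mk (cycS ρ) y := by
    intro q
    induction q using Quotient.ind with | _ a =>
    rw [hφmk]
    by_cases hay : ρ.SameCycle a y
    · rw [if_pos hay]
      intro hc
      exact h (Quotient.exact hc)
    · rw [if_neg hay]
      intro hc
      exact hay (Quotient.exact hc)
  -- injection Option (Quotient ρ') ↪ Quotient ρ
  have hinj1 : Function.Injective (fun o : Option (Quotient (cycS ρ')) =>
      Option.elim o (Quotient.mk (cycS ρ) y) φ) := by
    intro o o' hoo
    match o, o' with
    | none, none => rfl
    | none, some q => exact absurd hoo.symm (hφy q)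
    | some q, none => exact absurd hoo (hφy q)
    | some q, some q' => exact congrArg some (hφinj hoo)
  have h1 : cCount ρ' + 1 ≤ cCount ρ := by
    have := Nat.card_le_card_of_injective _ hinj1
    simpa [Finite.card_option, cCount] using this
  -- injection Quotient ρ ↪ Option (Quotient ρ')
  have hgresp : ∀ a b : Fin n, (cycS ρ).r a b →
      (if ρ.SameCycle a y then (none : Option (Quotient (cycS ρ'))) else some (Quotient.mk _ a)) =
      (if ρ.SameCycle b y then none else some (Quotient.mk _ b)) := by
    intro a b hab
    by_cases hay : ρ.SameCycle a y
    · rw [if_pos hay, if_pos ((Perm.SameCycle.symm hab).trans hay)]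
    · rw [if_neg hay, if_neg (fun hby => hay ((hab : ρ.SameCycle a b).trans hby))]
      exact congrArg some (Quotient.sound (sameCycle_mono_swap_mul hj hab))
  set χ : Quotient (cycS ρ) → Option (Quotient (cycS ρ')) :=
    Quotient.lift _ hgresp with hχ
  have hχinj : Function.Injective χ := by
    intro q q'
    induction q using Quotient.ind with | _ a =>
    induction q' using Quotient.ind with | _ b =>
    intro hab
    apply Quotient.sound
    show ρ.SameCycle a b
    by_cases hay : ρ.SameCycle a y <;> by_cases hby : ρ.SameCycle b y
    · exact hay.trans hby.symm
    · exfalso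
      have : (none : Option (Quotient (cycS ρ'))) = some (Quotient.mk _ b) := by
        simpa [hχ, hay, hby] using hab
      cases this
    · exfalso
      have : some (Quotient.mk (cycS ρ') a) = (none : Option (Quotient (cycS ρ'))) := by
        simpa [hχ, hay, hby] using hab
      cases this
    · have hab' : (Quotient.mk (cycS ρ') a) = Quotient.mk (cycS ρ') b := by
        have : some (Quotient.mk (cycS ρ') a) = some (Quotient.mk (cycS ρ') b) := by
          simpa [hχ, hay, hby] using hab
        exact Option.some_injective _ this
      have hab'' : ρ'.SameCycle a b := Quotient.exact hab'
      rcases sameCycle_swap_mul_refine ρ x y hab'' with h' | ⟨ha, hb⟩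
      · exact h'
      · have hax : ρ.SameCycle a x := ha.resolve_right hay
        have hbx : ρ.SameCycle b x := hb.resolve_right hby
        exact hax.trans hbx.symm
  have h2 : cCount ρ ≤ cCount ρ' + 1 := by
    have := Nat.card_le_card_of_injective _ hχinj
    simpa [Finite.card_option, cCount] using this
  omega

/-- Exact cut: cutting a cycle increases the cycle count by one. -/
theorem cCount_cut {ρ : Perm (Fin n)} {x y : Fin n} (hxy : x ≠ y)
    (h : ρ.SameCycle x y) : cCount (Equiv.swap x y * ρ) = cCount ρ + 1 := by
  have hns := not_sameCycle_swap_mul hxy h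
  have := cCount_join hxy hns
  rw [← mul_assoc, Equiv.swap_mul_self, one_mul] at this
  omega

theorem cCount_swap_mul_le {ρ : Perm (Fin n)} {x y : Fin n} (hxy : x ≠ y) :
    cCount (Equiv.swap x y * ρ) ≤ cCount ρ + 1 := by
  by_cases h : ρ.SameCycle x y
  · rw [cCount_cut hxy h]
  · have := cCount_join hxy h
    omega

/-- The orbit setoid of a set of permutations. -/
def orbS (S : Set (Perm (Fin n))) : Setoid (Fin n) := ⟨orel S, orel_equivalence S⟩

/-- The number of orbits of the group generated by `S`. -/
noncomputable def rCount (S : Set (Perm (Fin n))) : ℕ := Nat.card (Quotient (orbS S))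

theorem card_quotient_le {s t : Setoid (Fin n)} (h : ∀ a b : Fin n, s.r a b → t.r a b) :
    Nat.card (Quotient t) ≤ Nat.card (Quotient s) := by
  have hsurj : Function.Surjective (Quotient.map (sa := s) (sb := t) id h) := by
    intro q
    induction q using Quotient.ind with | _ a =>
    exact ⟨Quotient.mk s a, rfl⟩
  exact Nat.card_le_card_of_surjective _ hsurj

theorem card_quotient_of_eq {s : Setoid (Fin n)} (h : ∀ a b : Fin n, s.r a b ↔ a = b) :
    Nat.card (Quotient s) = n := by
  have hf : Function.Bijective (fun q : Quotient s =>
      Quotient.lift (id : Fin n → Fin n) (fun a b hab => (h a b).mp hab) q) := by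
    constructor
    · intro q q'
      induction q using Quotient.ind with | _ a =>
      induction q' using Quotient.ind with | _ b =>
      intro hab
      simp only [Quotient.lift_mk, id] at hab
      exact Quotient.sound ((h a b).mpr hab)
    · intro z; exact ⟨Quotient.mk _ z, rfl⟩
  have := Nat.card_congr (Equiv.ofBijective _ hf)
  simpa using this

theorem rCount_empty : rCount (∅ : Set (Perm (Fin n))) = n := by
  apply card_quotient_of_eq
  intro a b
  constructor
  · rintro ⟨g, hg, rfl⟩
    rw [Subgroup.closure_empty] at hg
    rw [Subgroup.mem_bot] at hg
    rw [hg]; rfl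
  · rintro rfl; exact orel_refl _ a

theorem orel_mono {S S' : Set (Perm (Fin n))} (h : S ⊆ S') {a b : Fin n}
    (hab : orel S a b) : orel S' a b := by
  obtain ⟨g, hg, rfl⟩ := hab
  exact ⟨g, Subgroup.closure_mono h hg, rfl⟩

section Merge

variable {S : Set (Perm (Fin n))} {δ : Perm (Fin n)} {a b c : Fin n}

/-- The canonical map used to compare orbit counts after adding a generator moving only
`a`, `b`, `c`. -/
private noncomputable def mgf (S : Set (Perm (Fin n))) (a b c : Fin n) (z : Fin n) :
    Quotient (orbS S) :=
  if orel S z a ∨ orel S z b ∨ orel S z c then Quotient.mk (orbS S) a else Quotient.mk (orbS S) z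

private theorem mgf_resp (hsupp : ∀ z, δ z ≠ z → z = a ∨ z = b ∨ z = c) :
    ∀ z w : Fin n, (orbS (insert δ S)).r z w → mgf S a b c z = mgf S a b c w := by
  have he : Equivalence (fun z w => mgf S a b c z = mgf S a b c w) :=
    ⟨fun _ => rfl, fun h => h.symm, fun h h' => h.trans h'⟩
  have hgen : ∀ g ∈ insert δ S, ∀ z, mgf S a b c z = mgf S a b c (g z) := by
    rintro g (rfl | hgS) z
    · rcases eq_or_ne (g z) z with hz | hz
      · rw [hz]
      · have h1 := hsupp z (fun hc => hz (by rw [hc]))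
        have h2 := hsupp (g z) (by
          intro hc
          exact hz (g.injective (by rw [hc])))
        have hcz : orel S z a ∨ orel S z b ∨ orel S z c := by
          rcases h1 with rfl | rfl | rfl
          · exact Or.inl (orel_refl S z)
          · exact Or.inr (Or.inl (orel_refl S z))
          · exact Or.inr (Or.inr (orel_refl S z))
        have hcgz : orel S (g z) a ∨ orel S (g z) b ∨ orel S (g z) c := by
          rcases h2 with h2 | h2 | h2 <;> rw [h2]
          · exact Or.inl (orel_refl S _)
          · exact Or.inr (Or.inl (orel_refl S _))
          · exact Or.inr (Or.inr (orel_refl S _))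
        rw [mgf, mgf, if_pos hcz, if_pos hcgz]
    · have horel : orel S z (g z) := orel_apply (Subgroup.subset_closure hgS) z
      rw [mgf, mgf]
      by_cases hcz : orel S z a ∨ orel S z b ∨ orel S z c
      · have : orel S (g z) a ∨ orel S (g z) b ∨ orel S (g z) c := by
          rcases hcz with h' | h' | h'
          · exact Or.inl (orel_trans (orel_symm horel) h')
          · exact Or.inr (Or.inl (orel_trans (orel_symm horel) h'))
          · exact Or.inr (Or.inr (orel_trans (orel_symm horel) h'))
        rw [if_pos hcz, if_pos this]
      · have : ¬ (orel S (g z) a ∨ orel S (g z) b ∨ orel S (g z) c) := by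
          intro hcon
          apply hcz
          rcases hcon with h' | h' | h'
          · exact Or.inl (orel_trans horel h')
          · exact Or.inr (Or.inl (orel_trans horel h'))
          · exact Or.inr (Or.inr (orel_trans horel h'))
        rw [if_neg hcz, if_neg this]
        exact Quotient.sound horel
  intro z w hzw
  obtain ⟨g, hg, rfl⟩ := hzw
  exact closure_pres he hgen g hg z

private theorem mgf_covers (hsupp : ∀ z, δ z ≠ z → z = a ∨ z = b ∨ z = c) (z : Fin n)
    (hz : ¬ orel S z b) (hz' : ¬ orel S z c) :
    mgf S a b c z = Quotient.mk (orbS S) z := by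
  rw [mgf]
  by_cases hcz : orel S z a ∨ orel S z b ∨ orel S z c
  · have hza : orel S z a := by tauto
    rw [if_pos hcz]
    exact (Quotient.sound (s := orbS S) hza).symm
  · rw [if_neg hcz]

/-- Adding a generator moving only three points merges at most three orbits. -/
theorem rCount_le_insert_two (hsupp : ∀ z, δ z ≠ z → z = a ∨ z = b ∨ z = c) :
    rCount S ≤ rCount (insert δ S) + 2 := by
  have hsurj : Function.Surjective (fun o : Option (Option (Quotient (orbS (insert δ S)))) =>
      Option.elim o (Quotient.mk (orbS S) b) (fun o' => Option.elim o'
        (Quotient.mk (orbS S) c) (Quotient.lift (mgf S a b c) (mgf_resp hsupp)))) := by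
    intro q
    induction q using Quotient.ind with | _ z =>
    by_cases hzb : orel S z b
    · exact ⟨none, (Quotient.sound (s := orbS S) hzb).symm⟩
    by_cases hzc : orel S z c
    · exact ⟨some none, (Quotient.sound (s := orbS S) hzc).symm⟩
    · exact ⟨some (some (Quotient.mk _ z)), mgf_covers hsupp z hzb hzc⟩
  have := Nat.card_le_card_of_surjective _ hsurj
  simpa [rCount, Finite.card_option, add_assoc] using this

/-- If two of the three points are already in a common orbit, at most two orbits merge. -/
theorem rCount_le_insert_one (hsupp : ∀ z, δ z ≠ z → z = a ∨ z = b ∨ z = c)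
    (htwo : orel S a b ∨ orel S b c ∨ orel S a c) :
    rCount S ≤ rCount (insert δ S) + 1 := by
  set d : Fin n := if orel S a b then c else b with hd
  have hcov : ∀ z : Fin n, ¬ orel S z d →
      Quotient.mk (orbS S) z = Quotient.lift (mgf S a b c) (mgf_resp hsupp)
        (Quotient.mk (orbS (insert δ S)) z) := by
    intro z hzd
    show Quotient.mk (orbS S) z = mgf S a b c z
    by_cases hab : orel S a b
    · rw [hd, if_pos hab] at hzd
      -- d = c ; missing class is that of c
      by_cases hzb : orel S z b
      · rw [mgf, if_pos (Or.inr (Or.inl hzb))]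
        exact Quotient.sound (orel_trans hzb (orel_symm hab))
      · rw [mgf_covers hsupp z hzb hzd]
    · rw [hd, if_neg hab] at hzd
      -- d = b
      have hbc_or_ac : orel S b c ∨ orel S a c := by tauto
      by_cases hzc : orel S z c
      · rw [mgf, if_pos (Or.inr (Or.inr hzc))]
        rcases hbc_or_ac with h' | h'
        · exact absurd (orel_trans hzc (orel_symm h')) hzd
        · exact Quotient.sound (orel_trans hzc (orel_symm h'))
      · rw [mgf_covers hsupp z hzd hzc]
  have hsurj : Function.Surjective (fun o : Option (Quotient (orbS (insert δ S))) =>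
      Option.elim o (Quotient.mk (orbS S) d)
        (Quotient.lift (mgf S a b c) (mgf_resp hsupp))) := by
    intro q
    induction q using Quotient.ind with | _ z =>
    by_cases hzd : orel S z d
    · exact ⟨none, (Quotient.sound (s := orbS S) hzd).symm⟩
    · exact ⟨some (Quotient.mk _ z), (hcov z hzd).symm⟩
  have := Nat.card_le_card_of_surjective _ hsurj
  simpa [rCount, Finite.card_option] using this

/-- If all three points are in a common orbit, no orbits merge. -/
theorem rCount_le_insert_zero (hsupp : ∀ z, δ z ≠ z → z = a ∨ z = b ∨ z = c)
    (hab : orel S a b) (hbc : orel S b c) :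
    rCount S ≤ rCount (insert δ S) := by
  apply card_quotient_le
  intro z w hzw
  obtain ⟨g, hg, rfl⟩ := hzw
  refine closure_pres (orel_equivalence S) ?_ g hg z
  rintro g' (rfl | hg') x
  · rcases eq_or_ne (g' x) x with hx | hx
    · rw [hx]; exact orel_refl S x
    · have h1 := hsupp x (fun hc => hx (by rw [hc]))
      have h2 := hsupp (g' x) (by
        intro hc
        exact hx (g'.injective (by rw [hc])))
      have key : ∀ u v : Fin n, (u = a ∨ u = b ∨ u = c) → (v = a ∨ v = b ∨ v = c) →
          orel S u v := by
        rintro u v (rfl|rfl|rfl) (rfl|rfl|rfl)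
        · exact orel_refl S _
        · exact hab
        · exact orel_trans hab hbc
        · exact orel_symm hab
        · exact orel_refl S _
        · exact hbc
        · exact orel_symm (orel_trans hab hbc)
        · exact orel_symm hbc
        · exact orel_refl S _
      exact key x (g' x) h1 h2
  · exact orel_apply (Subgroup.subset_closure hg') x

end Merge



/-- Decompose a 3-cycle as a product of two transpositions with explicit support. -/
theorem threeCycle_decomp (δ : Perm (Fin n)) (hδ : δ.IsThreeCycle) :
    ∃ a b c : Fin n, a ≠ b ∧ b ≠ c ∧ a ≠ c ∧ δ = Equiv.swap a b * Equiv.swap b c ∧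
      (∀ z, δ z ≠ z → z = a ∨ z = b ∨ z = c) := by
  have hcard : δ.support.card = 3 := hδ.card_support
  have hord : δ ^ 3 = 1 := by
    have := hδ.orderOf
    rw [← this]
    exact pow_orderOf_eq_one δ
  have hord' : ∀ z, δ (δ (δ z)) = z := by
    intro z
    have h1 : δ (δ (δ z)) = (δ ^ 3) z := by
      simp [pow_succ, Perm.mul_apply]
    rw [h1, hord]
    rfl
  obtain ⟨x, hx⟩ : ∃ x, x ∈ δ.support :=
    Finset.card_pos.mp (by omega : 0 < δ.support.card)
  have hxm : δ x ≠ x := Perm.mem_support.mp hx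
  have hab : x ≠ δ x := fun h => hxm h.symm
  have hbc : δ x ≠ δ (δ x) := fun h => hab (δ.injective h)
  have hac : x ≠ δ (δ x) := by
    intro h
    apply hxm
    have := congrArg δ h
    rw [hord' x] at this
    exact this
  have hbm : δ x ∈ δ.support := Perm.apply_mem_support.mpr hx
  have hcm : δ (δ x) ∈ δ.support := Perm.apply_mem_support.mpr hbm
  set S3 : Finset (Fin n) := {x, δ x, δ (δ x)} with hS3
  have hS3card : S3.card = 3 := by
    rw [hS3]
    rw [Finset.card_insert_of_notMem (by simp [hab, hac])]
    rw [Finset.card_insert_of_notMem (by simp [hbc])]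
    simp
  have hsub : S3 ⊆ δ.support := by
    intro z hz
    simp only [hS3, Finset.mem_insert, Finset.mem_singleton] at hz
    rcases hz with rfl | rfl | rfl <;> assumption
  have hsupp : δ.support = S3 := (Finset.eq_of_subset_of_card_le hsub (by omega)).symm
  have hmem3 : ∀ z, δ z ≠ z → z = x ∨ z = δ x ∨ z = δ (δ x) := by
    intro z hz
    have : z ∈ δ.support := Perm.mem_support.mpr hz
    rw [hsupp] at this
    simpa [hS3] using this
  refine ⟨x, δ x, δ (δ x), hab, hbc, hac, ?_, hmem3⟩
  ext z
  by_cases hz : δ z ≠ z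
  · rcases hmem3 z hz with rfl | rfl | rfl
    · rw [Perm.mul_apply, Equiv.swap_apply_of_ne_of_ne hab hac, Equiv.swap_apply_left]
    · rw [Perm.mul_apply, Equiv.swap_apply_left,
        Equiv.swap_apply_of_ne_of_ne (Ne.symm hac) (Ne.symm hbc)]
    · rw [Perm.mul_apply, Equiv.swap_apply_right, Equiv.swap_apply_right, hord' x]
  · push_neg at hz
    rw [hz, Perm.mul_apply]
    have hzx : z ≠ x := by rintro rfl; exact hxm hz
    have hzb : z ≠ δ x := by
      rintro rfl
      exact Perm.mem_support.mp hbm hz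
    have hzc : z ≠ δ (δ x) := by
      rintro rfl
      exact Perm.mem_support.mp hcm hz
    rw [Equiv.swap_apply_of_ne_of_ne hzb hzc, Equiv.swap_apply_of_ne_of_ne hzx hzb]


/-- The key Hurwitz-type lower bound: for a list of 3-cycles with product `π`,
`n + c(π) ≤ 2·length + 2·(number of orbits)`. -/
theorem main_bound (L : List (Perm (Fin n))) (h3 : ∀ δ ∈ L, δ.IsThreeCycle) :
    n + cCount L.prod ≤ 2 * L.length + 2 * rCount {τ | τ ∈ L} := by
  induction L with
  | nil =>
      have h1 : ({τ | τ ∈ ([] : List (Perm (Fin n)))} : Set _) = ∅ := by simp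
      rw [List.prod_nil, cCount_one, List.length_nil, h1, rCount_empty]
      omega
  | cons δ L ih =>
      have hδ := h3 δ List.mem_cons_self
      have h3' : ∀ τ ∈ L, τ.IsThreeCycle := fun τ hτ => h3 τ (List.mem_cons_of_mem δ hτ)
      have IH := ih h3'
      obtain ⟨a, b, c, hab, hbc, hac, hδeq, hsupp⟩ := threeCycle_decomp δ hδ
      set S : Set (Perm (Fin n)) := {τ | τ ∈ L} with hS
      set π := L.prod with hπ
      have hSins : ({τ | τ ∈ δ :: L} : Set (Perm (Fin n))) = insert δ S := by
        ext τ; simp [hS, List.mem_cons]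
      have hπmem : π ∈ Subgroup.closure S := by
        apply Subgroup.list_prod_mem
        intro τ hτ
        exact Subgroup.subset_closure hτ
      have hsc : ∀ {z w : Fin n}, π.SameCycle z w → orel S z w := fun hzw =>
        sameCycle_imp (orel_equivalence S) (fun z => orel_apply hπmem z) hzw
      have hprodeq : (δ :: L).prod = Equiv.swap a b * (Equiv.swap b c * π) := by
        rw [List.prod_cons, hδeq, mul_assoc]
      have hlen : (δ :: L).length = L.length + 1 := rfl
      rw [hprodeq, hlen, hSins]
      have hswap_apply : ∀ z : Fin n, (Equiv.swap b c * π) z = Equiv.swap b c (π z) :=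
        fun z => rfl
      by_cases h1 : orel S a b ∧ orel S b c
      · have hr := rCount_le_insert_zero (S := S) hsupp h1.1 h1.2
        have hc1 := cCount_swap_mul_le (ρ := π) hbc
        have hc2 := cCount_swap_mul_le (ρ := Equiv.swap b c * π) hab
        omega
      by_cases h2 : orel S a b ∨ orel S b c ∨ orel S a c
      · have hr := rCount_le_insert_one (S := S) hsupp h2
        have hcle : cCount (Equiv.swap a b * (Equiv.swap b c * π)) ≤ cCount π := by
          by_cases hbc' : π.SameCycle b c
          · have horbc : orel S b c := hsc hbc'
            have hnab : ¬ orel S a b := fun h => h1 ⟨h, horbc⟩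
            have hcut := cCount_cut hbc hbc'
            have hnsc : ¬ (Equiv.swap b c * π).SameCycle a b := by
              intro hscab
              apply hnab
              refine sameCycle_imp (orel_equivalence S) ?_ hscab
              intro z
              have hz1 : orel S z (π z) := orel_apply hπmem z
              rcases eq_or_ne (π z) b with hzb | hzb
              · rw [hswap_apply, hzb, Equiv.swap_apply_left]
                refine orel_trans hz1 ?_
                rw [hzb]; exact horbc
              rcases eq_or_ne (π z) c with hzc | hzc
              · rw [hswap_apply, hzc, Equiv.swap_apply_right]
                refine orel_trans hz1 ?_
                rw [hzc]; exact orel_symm horbc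
              · rw [hswap_apply, Equiv.swap_apply_of_ne_of_ne hzb hzc]
                exact hz1
            have hjoin := cCount_join hab hnsc
            omega
          · have hjoin := cCount_join hbc hbc'
            have hc2 := cCount_swap_mul_le (ρ := Equiv.swap b c * π) hab
            omega
        omega
      · push_neg at h2
        obtain ⟨hnab, hnbc, hnac⟩ := h2
        have hr := rCount_le_insert_two (S := S) hsupp
        have hnbc' : ¬ π.SameCycle b c := fun h => hnbc (hsc h)
        have hjoin1 := cCount_join hbc hnbc'
        have hnsc : ¬ (Equiv.swap b c * π).SameCycle a b := by
          intro hscab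
          set e : Fin n → Fin n → Prop := fun u v =>
            orel S u v ∨ ((orel S u b ∨ orel S u c) ∧ (orel S v b ∨ orel S v c)) with he_def
          have he : Equivalence e := by
            constructor
            · intro u; exact Or.inl (orel_refl S u)
            · rintro u v (huv | ⟨hu, hv⟩)
              · exact Or.inl (orel_symm huv)
              · exact Or.inr ⟨hv, hu⟩
            · rintro u v w (huv | ⟨hu, hv⟩) (hvw | ⟨hv', hw⟩)
              · exact Or.inl (orel_trans huv hvw)
              · exact Or.inr ⟨hv'.imp (fun hh => orel_trans huv hh)
                  (fun hh => orel_trans huv hh), hw⟩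
              · exact Or.inr ⟨hu, hv.imp (fun hh => orel_trans (orel_symm hvw) hh)
                  (fun hh => orel_trans (orel_symm hvw) hh)⟩
              · exact Or.inr ⟨hu, hw⟩
          have hstep : ∀ z, e z ((Equiv.swap b c * π) z) := by
            intro z
            have hz1 : orel S z (π z) := orel_apply hπmem z
            rcases eq_or_ne (π z) b with hzb | hzb
            · rw [hswap_apply, hzb, Equiv.swap_apply_left]
              refine Or.inr ⟨Or.inl ?_, Or.inr (orel_refl S c)⟩
              rw [← hzb]; exact hz1
            rcases eq_or_ne (π z) c with hzc | hzc
            · rw [hswap_apply, hzc, Equiv.swap_apply_right]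
              refine Or.inr ⟨Or.inr ?_, Or.inl (orel_refl S b)⟩
              rw [← hzc]; exact hz1
            · rw [hswap_apply, Equiv.swap_apply_of_ne_of_ne hzb hzc]
              exact Or.inl hz1
          rcases sameCycle_imp he hstep hscab with h' | ⟨ha', _⟩
          · exact hnab h'
          · rcases ha' with h' | h'
            · exact hnab h'
            · exact hnac h'
        have hjoin2 := cCount_join hab hnsc
        omega

/-- Parity: the cycle count of a product of 3-cycles has the parity of `n`. -/
theorem parity_bound (L : List (Perm (Fin n))) (h3 : ∀ δ ∈ L, δ.IsThreeCycle) :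
    Even (n + cCount L.prod) := by
  induction L with
  | nil =>
      rw [List.prod_nil, cCount_one]
      exact ⟨n, rfl⟩
  | cons δ L ih =>
      have hδ := h3 δ List.mem_cons_self
      have h3' : ∀ τ ∈ L, τ.IsThreeCycle := fun τ hτ => h3 τ (List.mem_cons_of_mem δ hτ)
      have IH := Nat.even_iff.mp (ih h3')
      obtain ⟨a, b, c, hab, hbc, hac, hδeq, hsupp⟩ := threeCycle_decomp δ hδ
      set π := L.prod with hπ
      have hprodeq : (δ :: L).prod = Equiv.swap a b * (Equiv.swap b c * π) := by
        rw [List.prod_cons, hδeq, mul_assoc]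
      have e1 : cCount (Equiv.swap b c * π) = cCount π + 1 ∨
          cCount (Equiv.swap b c * π) + 1 = cCount π := by
        by_cases h : π.SameCycle b c
        · exact Or.inl (cCount_cut hbc h)
        · exact Or.inr (cCount_join hbc h)
      have e2 : cCount (Equiv.swap a b * (Equiv.swap b c * π)) = cCount (Equiv.swap b c * π) + 1 ∨
          cCount (Equiv.swap a b * (Equiv.swap b c * π)) + 1 = cCount (Equiv.swap b c * π) := by
        by_cases h : (Equiv.swap b c * π).SameCycle a b
        · exact Or.inl (cCount_cut hab h)
        · exact Or.inr (cCount_join hab h)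
      rw [hprodeq]
      rw [Nat.even_iff]
      omega

section Bridge

/-- A point in the same cycle as a fixed point equals it. -/
theorem eq_of_sameCycle_fixed {ρ : Perm (Fin n)} {w z : Fin n} (hw : ρ w = w)
    (h : ρ.SameCycle z w) : z = w := by
  obtain ⟨i, hi⟩ := h.symm
  rw [Equiv.Perm.zpow_apply_eq_self_of_apply_eq_self hw i] at hi
  exact hi.symm

/-- Membership in `X` is invariant along cycles if all moved points lie in `X`. -/
theorem mem_of_sameCycle {ρ : Perm (Fin n)} {X : Finset (Fin n)}
    (hfix : ∀ z, ρ z ≠ z → z ∈ X) {z w : Fin n} (hz : z ∈ X) (h : ρ.SameCycle z w) :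
    w ∈ X := by
  by_cases hw : ρ w = w
  · rw [← eq_of_sameCycle_fixed hw h]; exact hz
  · exact hfix w hw

/-- The cycle setoid restricted to a finite set. -/
def cycSOn (ρ : Perm (Fin n)) (X : Finset (Fin n)) : Setoid {z : Fin n // z ∈ X} :=
  ⟨fun u v => ρ.SameCycle u.1 v.1,
    ⟨fun u => Perm.SameCycle.refl ρ u.1, Perm.SameCycle.symm, Perm.SameCycle.trans⟩⟩

/-- The number of cycles of `ρ` inside `X`. -/
noncomputable def cIn (ρ : Perm (Fin n)) (X : Finset (Fin n)) : ℕ :=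
  Nat.card (Quotient (cycSOn ρ X))

theorem bridge (ρ : Perm (Fin n)) (X : Finset (Fin n)) (hfix : ∀ z, ρ z ≠ z → z ∈ X) :
    cCount ρ = cIn ρ X + (n - X.card) := by
  have hresp : ∀ z w : Fin n, (cycS ρ).r z w →
      (if hz : z ∈ X then (Sum.inl (Quotient.mk (cycSOn ρ X) ⟨z, hz⟩) :
        Quotient (cycSOn ρ X) ⊕ {z : Fin n // z ∉ X}) else Sum.inr ⟨z, hz⟩) =
      (if hw : w ∈ X then Sum.inl (Quotient.mk (cycSOn ρ X) ⟨w, hw⟩) else Sum.inr ⟨w, hw⟩) := by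
    intro z w hzw
    have hzw' : ρ.SameCycle z w := hzw
    by_cases hz : z ∈ X
    · have hw : w ∈ X := mem_of_sameCycle hfix hz hzw'
      rw [dif_pos hz, dif_pos hw]
      exact congrArg Sum.inl (Quotient.sound hzw')
    · have hzfix : ρ z = z := by
        by_contra hc
        exact hz (hfix z hc)
      have : w = z := eq_of_sameCycle_fixed hzfix hzw'.symm
      subst this
      rfl
  set f : Quotient (cycS ρ) → Quotient (cycSOn ρ X) ⊕ {z : Fin n // z ∉ X} :=
    Quotient.lift _ hresp with hf
  have hresp2 : ∀ u v : {z : Fin n // z ∈ X}, (cycSOn ρ X).r u v →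
      Quotient.mk (cycS ρ) u.1 = Quotient.mk (cycS ρ) v.1 := by
    intro u v huv
    exact Quotient.sound huv
  set g : Quotient (cycSOn ρ X) ⊕ {z : Fin n // z ∉ X} → Quotient (cycS ρ) :=
    Sum.elim (Quotient.lift _ hresp2) (fun z => Quotient.mk (cycS ρ) z.1) with hg
  have hfg : Function.LeftInverse g f := by
    intro q
    induction q using Quotient.ind with | _ z =>
    by_cases hz : z ∈ X
    · show g (if hz' : z ∈ X then _ else _) = _
      rw [dif_pos hz]
      rfl
    · show g (if hz' : z ∈ X then _ else _) = _
      rw [dif_neg hz]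
      rfl
  have hgf : Function.RightInverse g f := by
    rintro (q | z)
    · induction q using Quotient.ind with | _ u =>
      show f (Quotient.mk (cycS ρ) u.1) = Sum.inl (Quotient.mk (cycSOn ρ X) u)
      show (if hz : u.1 ∈ X then (Sum.inl (Quotient.mk (cycSOn ρ X) ⟨u.1, hz⟩) : _) else _) = _
      rw [dif_pos u.2]
    · show f (Quotient.mk (cycS ρ) z.1) = Sum.inr z
      show (if hz : z.1 ∈ X then (Sum.inl (Quotient.mk (cycSOn ρ X) ⟨z.1, hz⟩) : _) else _) = _
      rw [dif_neg z.2]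
  have hequiv : Quotient (cycS ρ) ≃ (Quotient (cycSOn ρ X) ⊕ {z : Fin n // z ∉ X}) :=
    ⟨f, g, hfg, hgf⟩
  have hcard := Nat.card_congr hequiv
  rw [Nat.card_sum] at hcard
  have hcompl : Nat.card {z : Fin n // z ∉ X} = n - X.card := by
    rw [Nat.card_eq_fintype_card]
    have := Fintype.card_subtype_compl (fun z : Fin n => z ∈ X)
    simp only [Fintype.card_fin] at this
    rw [this, Fintype.card_coe]
  rw [hcompl] at hcard
  exact hcard

theorem cIn_pos {ρ : Perm (Fin n)} {X : Finset (Fin n)} (hX : X.Nonempty) :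
    0 < cIn ρ X := by
  obtain ⟨x, hx⟩ := hX
  have : Nonempty (Quotient (cycSOn ρ X)) := ⟨Quotient.mk _ ⟨x, hx⟩⟩
  exact Nat.card_pos

theorem cIn_le_card (ρ : Perm (Fin n)) (X : Finset (Fin n)) : cIn ρ X ≤ X.card := by
  have hsurj : Function.Surjective (Quotient.mk (cycSOn ρ X)) := by
    intro q
    induction q using Quotient.ind with | _ u =>
    exact ⟨u, rfl⟩
  have := Nat.card_le_card_of_surjective _ hsurj
  rw [Nat.card_eq_fintype_card (α := {z : Fin n // z ∈ X}), Fintype.card_coe] at this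
  exact this

theorem cIn_one_sameCycle {ρ : Perm (Fin n)} {X : Finset (Fin n)} (h : cIn ρ X = 1)
    {x y : Fin n} (hx : x ∈ X) (hy : y ∈ X) : ρ.SameCycle x y := by
  have h' : Nat.card (Quotient (cycSOn ρ X)) = 1 := h
  have hsub : Subsingleton (Quotient (cycSOn ρ X)) :=
    Finite.card_le_one_iff_subsingleton.mp (le_of_eq h')
  have : Quotient.mk (cycSOn ρ X) ⟨x, hx⟩ = Quotient.mk (cycSOn ρ X) ⟨y, hy⟩ :=
    Subsingleton.elim _ _
  exact Quotient.exact this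

theorem three_le_nat_card {α : Type*} [Finite α] {a b c : α} (hab : a ≠ b) (hac : a ≠ c)
    (hbc : b ≠ c) : 3 ≤ Nat.card α := by
  have := Fintype.ofFinite α
  rw [Nat.card_eq_fintype_card]
  classical
  have h1 : ({a, b, c} : Finset α).card = 3 := by
    rw [Finset.card_insert_of_notMem (by simp [hab, hac]),
      Finset.card_insert_of_notMem (by simp [hbc]), Finset.card_singleton]
  calc 3 = ({a, b, c} : Finset α).card := h1.symm
    _ ≤ Fintype.card α := Finset.card_le_univ _

theorem exists_three_of_card {α : Type*} [Finite α] (h : 3 ≤ Nat.card α) :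
    ∃ a b c : α, a ≠ b ∧ a ≠ c ∧ b ≠ c := by
  have hnt : Nontrivial α := Finite.one_lt_card_iff_nontrivial.mp (by omega)
  obtain ⟨a, b, hab⟩ := hnt.exists_pair_ne
  by_contra hcon
  push_neg at hcon
  have := Fintype.ofFinite α
  have hsub : (Finset.univ : Finset α) ⊆ {a, b} := by
    intro c _
    simp only [Finset.mem_insert, Finset.mem_singleton]
    by_contra hc
    push_neg at hc
    exact hc.2 ((hcon a b c hab (fun h => hc.1 h.symm)).symm)
  have hle : Fintype.card α ≤ 2 := by
    calc Fintype.card α = (Finset.univ : Finset α).card := (Finset.card_univ).symm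
      _ ≤ ({a, b} : Finset α).card := Finset.card_le_card hsub
      _ ≤ 2 := Finset.card_insert_le a {b} |>.trans (by simp)
  rw [Nat.card_eq_fintype_card] at h
  omega

theorem two_le_nat_card {α : Type*} [Finite α] {a b : α} (hab : a ≠ b) : 2 ≤ Nat.card α := by
  have : Nontrivial α := ⟨a, b, hab⟩
  exact Finite.one_lt_card

end Bridge

section Upper

theorem double_swap_fix {a b c d z : Fin n} {σ : Perm (Fin n)} (hσz : σ z = z)
    (h1 : z ≠ a) (h2 : z ≠ b) (h3 : z ≠ c) (h4 : z ≠ d) :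
    (Equiv.swap a b * (Equiv.swap c d * σ)) z = z := by
  simp only [Perm.mul_apply, hσz, Equiv.swap_apply_of_ne_of_ne h3 h4,
    Equiv.swap_apply_of_ne_of_ne h1 h2]

/-- Construction of minimal transitive factorizations into 3-cycles. -/
theorem upper (N : ℕ) : ∀ (σ : Perm (Fin n)) (X : Finset (Fin n)),
    (∀ z, σ z ≠ z → z ∈ X) → (X.card = 1 ∨ 3 ≤ X.card) →
    X.card + cIn σ X = 2 * N + 2 →
    ∃ F : List (Perm (Fin n)), F.length = N ∧ (∀ δ ∈ F, δ.IsThreeCycle) ∧ F.prod = σ ∧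
      (∀ δ ∈ F, ∀ z : Fin n, δ z ≠ z → z ∈ X) ∧
      (∀ x ∈ X, ∀ y ∈ X, orel {τ | τ ∈ F} x y) := by
  induction N with
  | zero =>
      intro σ X hfix hXcard hsum
      have hXpos : 0 < X.card := by rcases hXcard with h | h <;> omega
      have hcpos : 0 < cIn σ X := cIn_pos (Finset.card_pos.mp hXpos)
      have hcle : cIn σ X ≤ X.card := cIn_le_card σ X
      have hX1 : X.card = 1 := by rcases hXcard with h | h <;> omega
      obtain ⟨x₀, hx₀⟩ := Finset.card_eq_one.mp hX1
      have hσ1 : σ = 1 := by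
        apply Equiv.ext
        intro z
        simp only [Perm.one_apply]
        by_contra hz
        have h1 : z ∈ X := hfix z hz
        have h2 : σ z ∈ X := hfix (σ z) (fun hc => hz (σ.injective hc))
        rw [hx₀] at h1 h2
        simp only [Finset.mem_singleton] at h1 h2
        exact hz (h2.trans h1.symm)
      refine ⟨[], rfl, by simp, by simp [hσ1], by simp, ?_⟩
      intro x hx y hy
      rw [hx₀] at hx hy
      simp only [Finset.mem_singleton] at hx hy
      rw [hx, hy]
      exact orel_refl _ _
  | succ N IH =>
      intro σ X hfix hXcard hsum
      have hXn : X.card ≤ n := by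
        have := Finset.card_le_univ X
        simpa using this
      have hXpos : 0 < X.card := by rcases hXcard with h | h <;> omega
      have hXne : X.Nonempty := Finset.card_pos.mp hXpos
      have hcpos : 0 < cIn σ X := cIn_pos hXne
      have hcle : cIn σ X ≤ X.card := cIn_le_card σ X
      have hX3 : 3 ≤ X.card := by
        rcases hXcard with h | h
        · omega
        · exact h
      have hbr := bridge σ X hfix
      by_cases h3c : 3 ≤ cIn σ X
      -- CASE A : at least three cycles inside X; join two pairs
      · obtain ⟨q1, q2, q3, h12, h13, h23⟩ :=
          exists_three_of_card (h3c : 3 ≤ Nat.card (Quotient (cycSOn σ X)))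
        obtain ⟨u, hu⟩ := Quotient.exists_rep q1
        obtain ⟨v, hv⟩ := Quotient.exists_rep q2
        obtain ⟨w, hw⟩ := Quotient.exists_rep q3
        have hnab : ¬ σ.SameCycle u.1 v.1 := fun h => h12 (by rw [← hu, ← hv]; exact Quotient.sound h)
        have hnac : ¬ σ.SameCycle u.1 w.1 := fun h => h13 (by rw [← hu, ← hw]; exact Quotient.sound h)
        have hnbc : ¬ σ.SameCycle v.1 w.1 := fun h => h23 (by rw [← hv, ← hw]; exact Quotient.sound h)
        set a := u.1 with ha
        set b := v.1 with hb
        set c := w.1 with hc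
        have haX : a ∈ X := u.2
        have hbX : b ∈ X := v.2
        have hcX : c ∈ X := w.2
        have hab : a ≠ b := fun h => hnab (h ▸ Perm.SameCycle.refl σ a)
        have hac : a ≠ c := fun h => hnac (h ▸ Perm.SameCycle.refl σ a)
        have hbc : b ≠ c := fun h => hnbc (h ▸ Perm.SameCycle.refl σ b)
        set σ₁ := Equiv.swap a b * σ with hσ₁
        set σ'' := Equiv.swap c a * σ₁ with hσ''
        have hj1 : cCount σ₁ + 1 = cCount σ := cCount_join hab hnab
        have hn2 : ¬ σ₁.SameCycle c a := by
          intro hsc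
          rcases sameCycle_swap_mul_refine σ a b hsc with h' | ⟨hcl, _⟩
          · exact hnac h'.symm
          · rcases hcl with h' | h'
            · exact hnac h'.symm
            · exact hnbc h'.symm
        have hj2 : cCount σ'' + 1 = cCount σ₁ := cCount_join (fun h => hac h.symm) hn2
        have hfix'' : ∀ z, σ'' z ≠ z → z ∈ X := by
          intro z hz
          by_cases hσz : σ z = z
          · by_cases hza : z = a
            · rw [hza]; exact haX
            by_cases hzb : z = b
            · rw [hzb]; exact hbX
            by_cases hzc : z = c
            · rw [hzc]; exact hcX
            · exact absurd (double_swap_fix hσz hzc hza hza hzb) hz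
          · exact hfix z hσz
        have hbr'' := bridge σ'' X hfix''
        have hsum'' : X.card + cIn σ'' X = 2 * N + 2 := by omega
        obtain ⟨F'', hlen'', h3cyc'', hprod'', hsupp'', htrans''⟩ :=
          IH σ'' X hfix'' (Or.inr hX3) hsum''
        set δ := Equiv.swap a b * Equiv.swap c a with hδ
        have hδ3 : δ.IsThreeCycle := by
          rw [hδ, Equiv.swap_comm c a]
          exact isThreeCycle_swap_mul_swap_same hab hac hbc
        have hδsupp : ∀ z, δ z ≠ z → z = a ∨ z = b ∨ z = c := by
          intro z hz
          by_contra hcon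
          push_neg at hcon
          obtain ⟨h1, h2, h3⟩ := hcon
          apply hz
          show Equiv.swap a b (Equiv.swap c a z) = z
          rw [Equiv.swap_apply_of_ne_of_ne h3 h1, Equiv.swap_apply_of_ne_of_ne h1 h2]
        refine ⟨δ :: F'', by simp [hlen''], ?_, ?_, ?_, ?_⟩
        · rintro τ hτ
          rcases List.mem_cons.mp hτ with rfl | hτ'
          · exact hδ3
          · exact h3cyc'' τ hτ'
        · rw [List.prod_cons, hprod'', hσ'', hσ₁, hδ]
          rw [mul_assoc]
          rw [Equiv.swap_mul_self_mul, Equiv.swap_mul_self_mul]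
        · rintro τ hτ z hz
          rcases List.mem_cons.mp hτ with rfl | hτ'
          · rcases hδsupp z hz with rfl | rfl | rfl
            · exact haX
            · exact hbX
            · exact hcX
          · exact hsupp'' τ hτ' z hz
        · intro x hx y hy
          refine orel_mono ?_ (htrans'' x hx y hy)
          intro τ hτ
          exact List.mem_cons_of_mem δ hτ
      · rcases (by omega : cIn σ X = 1 ∨ cIn σ X = 2) with hc1 | hc2
        -- CASE C : one cycle inside X
        · have hXval : X.card = 2 * N + 3 := by omega
          rcases Nat.eq_zero_or_pos N with hN0 | hNpos
          -- X.card = 3 : σ itself is a 3-cycle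
          · subst hN0
            have hX3' : X.card = 3 := by omega
            have hsupX : σ.support = X := by
              ext z
              simp only [Perm.mem_support]
              constructor
              · exact hfix z
              · intro hz
                by_contra hσz
                obtain ⟨y, hyX, hyz⟩ := Finset.exists_mem_ne (s := X) (by omega) z
                have hsc : σ.SameCycle y z := cIn_one_sameCycle hc1 hyX hz
                exact hyz (eq_of_sameCycle_fixed hσz hsc)
            have h3 : σ.IsThreeCycle := by
              rw [← card_support_eq_three_iff, hsupX]
              exact hX3'
            refine ⟨[σ], rfl, ?_, by simp, ?_, ?_⟩
            · intro τ hτ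
              rw [List.mem_singleton] at hτ
              rw [hτ]; exact h3
            · intro τ hτ z hz
              rw [List.mem_singleton] at hτ
              exact hfix z (hτ ▸ hz)
            · intro x hx y hy
              obtain ⟨i, hi⟩ := cIn_one_sameCycle hc1 hx hy
              refine ⟨σ ^ i, zpow_mem (Subgroup.subset_closure ?_) i, hi⟩
              show σ ∈ {τ | τ ∈ [σ]}
              simp
          -- X.card ≥ 5 : cut off two points of the long cycle
          · have hX5 : 5 ≤ X.card := by omega
            obtain ⟨u, huX, hσu⟩ : ∃ u ∈ X, σ u ≠ u := by
              by_contra hcon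
              push_neg at hcon
              obtain ⟨x₁, hx₁⟩ := hXne
              obtain ⟨y₁, hy₁X, hy₁⟩ := Finset.exists_mem_ne (s := X) (by omega) x₁
              exact hy₁ (eq_of_sameCycle_fixed (hcon x₁ hx₁)
                (cIn_one_sameCycle hc1 hy₁X hx₁))
            set b := σ u with hbdef
            set c := σ b with hcdef
            have hub : u ≠ b := fun h => hσu h.symm
            have hσb : σ b ≠ b := fun h => hσu (σ.injective (by rw [← hbdef, h]))
            have hbc : b ≠ c := fun h => hσb h.symm
            have hbX : b ∈ X := hfix b hσb
            have hσc : σ c ≠ c := fun h => hσb (σ.injective (by rw [← hcdef, h]))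
            have hcX : c ∈ X := hfix c hσc
            have huc : u ≠ c := by
              intro h
              -- then the orbit of u is {u, b}, contradicting |X| ≥ 5
              have hcu : σ (σ u) = u := by rw [← hbdef, ← hcdef, ← h]
              have horb : ∀ k : ℕ, (σ ^ k) u = u ∨ (σ ^ k) u = b := by
                intro k
                induction k with
                | zero => exact Or.inl (by simp)
                | succ k ih =>
                    have hstep : (σ ^ (k+1)) u = σ ((σ ^ k) u) := by
                      rw [pow_succ', Perm.mul_apply]
                    rcases ih with h' | h'
                    · rw [hstep, h']; exact Or.inr rfl
                    · rw [hstep, h']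
                      exact Or.inl hcu
              obtain ⟨y, hyX, hyub⟩ : ∃ y ∈ X, y ≠ u ∧ y ≠ b := by
                by_contra hcon
                push_neg at hcon
                have hsub : X ⊆ {u, b} := by
                  intro z hz
                  simp only [Finset.mem_insert, Finset.mem_singleton]
                  by_contra hzc
                  push_neg at hzc
                  exact hzc.2 (hcon z hz hzc.1)
                have := Finset.card_le_card hsub
                have h2 : ({u, b} : Finset (Fin n)).card ≤ 2 :=
                  (Finset.card_insert_le u {b}).trans (by simp)
                omega
              have hsc : σ.SameCycle u y := cIn_one_sameCycle hc1 huX hyX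
              obtain ⟨k, -, hk⟩ := hsc.exists_pow_eq'
              rcases horb k with h' | h'
              · exact hyub.1 (by rw [← hk, h'])
              · exact hyub.2 (by rw [← hk, h'])
            set ρ := Equiv.swap u b * σ with hρdef
            have hSCub : σ.SameCycle u b := ⟨1, by simp [hbdef]⟩
            have hcut1 : cCount ρ = cCount σ + 1 := cCount_cut hub hSCub
            have hρu : ρ u = u := by
              show Equiv.swap u b (σ u) = u
              rw [← hbdef, Equiv.swap_apply_right]
            have hρb : ρ b = c := by
              show Equiv.swap u b (σ b) = c
              rw [← hcdef, Equiv.swap_apply_of_ne_of_ne (fun h => huc h.symm)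
                (fun h => hbc h.symm)]
            set σ'' := Equiv.swap b c * ρ with hσ''def
            have hSCbc : ρ.SameCycle b c := ⟨1, by simp [hρb]⟩
            have hcut2 : cCount σ'' = cCount ρ + 1 := cCount_cut hbc hSCbc
            have hσ''u : σ'' u = u := by
              show Equiv.swap b c (ρ u) = u
              rw [hρu, Equiv.swap_apply_of_ne_of_ne hub huc]
            have hσ''b : σ'' b = b := by
              show Equiv.swap b c (ρ b) = b
              rw [hρb, Equiv.swap_apply_right]
            set X'' := (X.erase u).erase b with hX''def
            have hbmem : b ∈ X.erase u := Finset.mem_erase.mpr ⟨fun h => hub h.symm, hbX⟩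
            have hX''card : X''.card = X.card - 2 := by
              rw [hX''def, Finset.card_erase_of_mem hbmem, Finset.card_erase_of_mem huX]
              omega
            have hcX'' : c ∈ X'' := by
              rw [hX''def]
              exact Finset.mem_erase.mpr ⟨fun h => hbc h.symm,
                Finset.mem_erase.mpr ⟨fun h => huc h.symm, hcX⟩⟩
            have hfix'' : ∀ z, σ'' z ≠ z → z ∈ X'' := by
              intro z hz
              have hzu : z ≠ u := fun h => hz (h ▸ hσ''u)
              have hzb : z ≠ b := fun h => hz (h ▸ hσ''b)
              have hzX : z ∈ X := by
                by_cases hσz : σ z = z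
                · by_cases hzc : z = c
                  · rw [hzc]; exact hcX
                  · exact absurd (double_swap_fix hσz hzb hzc hzu hzb) hz
                · exact hfix z hσz
              rw [hX''def]
              exact Finset.mem_erase.mpr ⟨hzb, Finset.mem_erase.mpr ⟨hzu, hzX⟩⟩
            have hbr'' := bridge σ'' X'' hfix''
            have hX''n : X''.card ≤ n := by
              have := Finset.card_le_univ X''
              simpa using this
            have hcpos'' : 0 < cIn σ'' X'' := by
              apply cIn_pos
              exact ⟨c, hcX''⟩
            have hcle'' : cIn σ'' X'' ≤ X''.card := cIn_le_card σ'' X''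
            have hsum'' : X''.card + cIn σ'' X'' = 2 * N + 2 := by omega
            obtain ⟨F'', hlen'', h3cyc'', hprod'', hsupp'', htrans''⟩ :=
              IH σ'' X'' hfix'' (Or.inr (by omega)) hsum''
            set δ := Equiv.swap u b * Equiv.swap b c with hδdef
            have hδ3 : δ.IsThreeCycle := by
              rw [hδdef, Equiv.swap_comm u b]
              exact isThreeCycle_swap_mul_swap_same (fun h => hub h.symm) hbc huc
            have hδu : δ u = b := by
              show Equiv.swap u b (Equiv.swap b c u) = b
              rw [Equiv.swap_apply_of_ne_of_ne hub huc, Equiv.swap_apply_left]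
            have hδb : δ b = c := by
              show Equiv.swap u b (Equiv.swap b c b) = c
              rw [Equiv.swap_apply_left, Equiv.swap_apply_of_ne_of_ne
                (fun h => huc h.symm) (fun h => hbc h.symm)]
            have hδsupp : ∀ z, δ z ≠ z → z = u ∨ z = b ∨ z = c := by
              intro z hz
              by_contra hcon
              push_neg at hcon
              obtain ⟨h1, h2, h3⟩ := hcon
              apply hz
              show Equiv.swap u b (Equiv.swap b c z) = z
              rw [Equiv.swap_apply_of_ne_of_ne h2 h3, Equiv.swap_apply_of_ne_of_ne h1 h2]
            have hδmem : δ ∈ {τ | τ ∈ δ :: F''} := by simp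
            have hreach : ∀ x ∈ X, ∃ x' ∈ X'', orel {τ | τ ∈ δ :: F''} x x' := by
              intro x hx
              by_cases hxu : x = u
              · refine ⟨c, hcX'', ?_⟩
                refine ⟨δ * δ, mul_mem (Subgroup.subset_closure hδmem)
                  (Subgroup.subset_closure hδmem), ?_⟩
                rw [Perm.mul_apply, hxu, hδu, hδb]
              by_cases hxb : x = b
              · refine ⟨c, hcX'', ?_⟩
                refine ⟨δ, Subgroup.subset_closure hδmem, ?_⟩
                rw [hxb, hδb]
              · refine ⟨x, ?_, orel_refl _ x⟩
                rw [hX''def]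
                exact Finset.mem_erase.mpr ⟨hxb, Finset.mem_erase.mpr ⟨hxu, hx⟩⟩
            refine ⟨δ :: F'', by simp [hlen''], ?_, ?_, ?_, ?_⟩
            · rintro τ hτ
              rcases List.mem_cons.mp hτ with rfl | hτ'
              · exact hδ3
              · exact h3cyc'' τ hτ'
            · rw [List.prod_cons, hprod'', hσ''def, hρdef, hδdef]
              rw [mul_assoc]
              rw [Equiv.swap_mul_self_mul, Equiv.swap_mul_self_mul]
            · rintro τ hτ z hz
              rcases List.mem_cons.mp hτ with rfl | hτ'
              · rcases hδsupp z hz with rfl | rfl | rfl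
                · exact huX
                · exact hbX
                · exact hcX
              · have := hsupp'' τ hτ' z hz
                rw [hX''def] at this
                exact Finset.mem_of_mem_erase (Finset.mem_of_mem_erase this)
            · intro x hx y hy
              obtain ⟨x', hx', hox⟩ := hreach x hx
              obtain ⟨y', hy', hoy⟩ := hreach y hy
              have hmid : orel {τ | τ ∈ δ :: F''} x' y' := by
                refine orel_mono ?_ (htrans'' x' hx' y' hy')
                intro τ hτ
                exact List.mem_cons_of_mem δ hτ
              exact orel_trans (orel_trans hox hmid) (orel_symm hoy)
        -- CASE B : two cycles inside X; join them and split off a point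
        · obtain ⟨u, v, huX, hvX, hnuv, hσv, hcov⟩ :
              ∃ u v : Fin n, u ∈ X ∧ v ∈ X ∧ ¬ σ.SameCycle u v ∧ σ v ≠ v ∧
                (∀ z ∈ X, σ.SameCycle z u ∨ σ.SameCycle z v) := by
            have hnt : Nontrivial (Quotient (cycSOn σ X)) :=
              Finite.one_lt_card_iff_nontrivial.mp (by
                have h2' : Nat.card (Quotient (cycSOn σ X)) = 2 := hc2
                omega)
            obtain ⟨q1, q2, hq12⟩ := hnt.exists_pair_ne
            obtain ⟨u₀, hu₀⟩ := Quotient.exists_rep q1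
            obtain ⟨v₀, hv₀⟩ := Quotient.exists_rep q2
            have hnuv₀ : ¬ σ.SameCycle u₀.1 v₀.1 := fun h =>
              hq12 (by rw [← hu₀, ← hv₀]; exact Quotient.sound h)
            have hcov₀ : ∀ z ∈ X, σ.SameCycle z u₀.1 ∨ σ.SameCycle z v₀.1 := by
              intro z hz
              by_contra hcon
              push_neg at hcon
              have hz1 : Quotient.mk (cycSOn σ X) ⟨z, hz⟩ ≠ q1 := by
                rw [← hu₀]
                intro h
                exact hcon.1 (Quotient.exact h)
              have hz2 : Quotient.mk (cycSOn σ X) ⟨z, hz⟩ ≠ q2 := by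
                rw [← hv₀]
                intro h
                exact hcon.2 (Quotient.exact h)
              have := three_le_nat_card hz1 hz2 hq12
              have hcontra : 3 ≤ cIn σ X := this
              omega
            by_cases hv₀fix : σ v₀.1 ≠ v₀.1
            · exact ⟨u₀.1, v₀.1, u₀.2, v₀.2, hnuv₀, hv₀fix, hcov₀⟩
            push_neg at hv₀fix
            by_cases hu₀fix : σ u₀.1 ≠ u₀.1
            · refine ⟨v₀.1, u₀.1, v₀.2, u₀.2, fun h => hnuv₀ h.symm, hu₀fix, ?_⟩
              intro z hz
              exact (hcov₀ z hz).symm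
            push_neg at hu₀fix
            exfalso
            obtain ⟨t, htX, htu, htv⟩ : ∃ t ∈ X, t ≠ u₀.1 ∧ t ≠ v₀.1 := by
              by_contra hcon
              push_neg at hcon
              have hsub : X ⊆ {u₀.1, v₀.1} := by
                intro z hz
                simp only [Finset.mem_insert, Finset.mem_singleton]
                by_contra hzc
                push_neg at hzc
                exact hzc.2 (hcon z hz hzc.1)
              have := Finset.card_le_card hsub
              have h2 : ({u₀.1, v₀.1} : Finset (Fin n)).card ≤ 2 :=
                (Finset.card_insert_le _ _).trans (by simp)
              omega
            rcases hcov₀ t htX with h' | h'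
            · exact htu (eq_of_sameCycle_fixed hu₀fix h')
            · exact htv (eq_of_sameCycle_fixed hv₀fix h')
          have hne : u ≠ v := fun h => hnuv (h ▸ Perm.SameCycle.refl σ u)
          set ρ := Equiv.swap u v * σ with hρdef
          have hjp : cCount ρ + 1 = cCount σ := cCount_join hne hnuv
          have hσvu : σ v ≠ u := by
            intro h
            exact hnuv (Perm.SameCycle.symm ⟨1, by simp [h]⟩)
          have hρv : ρ v = σ v := by
            show Equiv.swap u v (σ v) = σ v
            rw [Equiv.swap_apply_of_ne_of_ne hσvu hσv]
          have hρu : ρ u ≠ u := by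
            show Equiv.swap u v (σ u) ≠ u
            by_cases hσu : σ u = u
            · rw [hσu, Equiv.swap_apply_left]
              exact fun h => hne h.symm
            · have hσuv : σ u ≠ v := by
                intro h
                exact hnuv ⟨1, by simp [h]⟩
              rw [Equiv.swap_apply_of_ne_of_ne hσu hσuv]
              exact hσu
          set p := ρ⁻¹ u with hpdef
          have hρp : ρ p = u := by rw [hpdef]; exact ρ.apply_symm_apply u
          have hpu : p ≠ u := by
            intro h
            rw [h] at hρp
            exact hρu hρp
          have hpv : p ≠ v := by
            intro h
            rw [h] at hρp
            rw [hρv] at hρp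
            exact hσvu hρp
          have hσp : σ p = v := by
            have h1 : Equiv.swap u v (σ p) = u := hρp
            have h2 : σ p = Equiv.swap u v (Equiv.swap u v (σ p)) := by
              rw [Equiv.swap_apply_self]
            rw [h2, h1, Equiv.swap_apply_left]
          have hpX : p ∈ X := hfix p (by rw [hσp]; exact Ne.symm hpv)
          set σ'' := Equiv.swap p u * ρ with hσ''def
          have hSCpu : ρ.SameCycle p u := ⟨1, by simp [hρp]⟩
          have hcut : cCount σ'' = cCount ρ + 1 := cCount_cut hpu hSCpu
          have hσ''p : σ'' p = p := by
            show Equiv.swap p u (ρ p) = p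
            rw [hρp, Equiv.swap_apply_right]
          set X'' := X.erase p with hX''def
          have hX''card : X''.card = X.card - 1 := Finset.card_erase_of_mem hpX
          have hXval : X.card = 2 * N + 2 := by omega
          have hN1 : 1 ≤ N := by omega
          have hfix'' : ∀ z, σ'' z ≠ z → z ∈ X'' := by
            intro z hz
            have hzp : z ≠ p := fun h => hz (h ▸ hσ''p)
            have hzX : z ∈ X := by
              by_cases hσz : σ z = z
              · by_cases hzu : z = u
                · rw [hzu]; exact huX
                by_cases hzv : z = v
                · rw [hzv]; exact hvX
                · exact absurd (double_swap_fix hσz hzp hzu hzu hzv) hz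
              · exact hfix z hσz
            rw [hX''def]
            exact Finset.mem_erase.mpr ⟨hzp, hzX⟩
          have hbr'' := bridge σ'' X'' hfix''
          have hX''n : X''.card ≤ n := by
            have := Finset.card_le_univ X''
            simpa using this
          have hvX'' : v ∈ X'' := by
            rw [hX''def]
            exact Finset.mem_erase.mpr ⟨fun h => hpv h.symm, hvX⟩
          have hcpos'' : 0 < cIn σ'' X'' := cIn_pos ⟨v, hvX''⟩
          have hcle'' : cIn σ'' X'' ≤ X''.card := cIn_le_card σ'' X''
          have hsum'' : X''.card + cIn σ'' X'' = 2 * N + 2 := by omega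
          obtain ⟨F'', hlen'', h3cyc'', hprod'', hsupp'', htrans''⟩ :=
            IH σ'' X'' hfix'' (Or.inr (by omega)) hsum''
          set δ := Equiv.swap u v * Equiv.swap p u with hδdef
          have hδ3 : δ.IsThreeCycle := by
            rw [hδdef, Equiv.swap_comm p u]
            exact isThreeCycle_swap_mul_swap_same hne (fun h => hpu h.symm)
              (fun h => hpv h.symm)
          have hδp : δ p = v := by
            show Equiv.swap u v (Equiv.swap p u p) = v
            rw [Equiv.swap_apply_left, Equiv.swap_apply_left]
          have hδsupp : ∀ z, δ z ≠ z → z = p ∨ z = u ∨ z = v := by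
            intro z hz
            by_contra hcon
            push_neg at hcon
            obtain ⟨h1, h2, h3⟩ := hcon
            apply hz
            show Equiv.swap u v (Equiv.swap p u z) = z
            rw [Equiv.swap_apply_of_ne_of_ne h1 h2, Equiv.swap_apply_of_ne_of_ne h2 h3]
          have hδmem : δ ∈ {τ | τ ∈ δ :: F''} := by simp
          have hreach : ∀ x ∈ X, ∃ x' ∈ X'', orel {τ | τ ∈ δ :: F''} x x' := by
            intro x hx
            by_cases hxp : x = p
            · refine ⟨v, hvX'', ?_⟩
              refine ⟨δ, Subgroup.subset_closure hδmem, ?_⟩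
              rw [hxp, hδp]
            · refine ⟨x, ?_, orel_refl _ x⟩
              rw [hX''def]
              exact Finset.mem_erase.mpr ⟨hxp, hx⟩
          refine ⟨δ :: F'', by simp [hlen''], ?_, ?_, ?_, ?_⟩
          · rintro τ hτ
            rcases List.mem_cons.mp hτ with rfl | hτ'
            · exact hδ3
            · exact h3cyc'' τ hτ'
          · rw [List.prod_cons, hprod'', hσ''def, hρdef, hδdef]
            rw [mul_assoc]
            rw [Equiv.swap_mul_self_mul, Equiv.swap_mul_self_mul]
          · rintro τ hτ z hz
            rcases List.mem_cons.mp hτ with rfl | hτ'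
            · rcases hδsupp z hz with rfl | rfl | rfl
              · exact hpX
              · exact huX
              · exact hvX
            · have := hsupp'' τ hτ' z hz
              rw [hX''def] at this
              exact Finset.mem_of_mem_erase this
          · intro x hx y hy
            obtain ⟨x', hx', hox⟩ := hreach x hx
            obtain ⟨y', hy', hoy⟩ := hreach y hy
            have hmid : orel {τ | τ ∈ δ :: F''} x' y' := by
              refine orel_mono ?_ (htrans'' x' hx' y' hy')
              intro τ hτ
              exact List.mem_cons_of_mem δ hτ
            exact orel_trans (orel_trans hox hmid) (orel_symm hoy)

end Upper

section Assembly

theorem length_filter_partition {α : Type*} (L : List α) (p q : α → Bool)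
    (h : ∀ a ∈ L, q a = !p a) :
    (L.filter p).length + (L.filter q).length = L.length := by
  induction L with
  | nil => simp
  | cons δ L ih =>
      have hδ := h δ List.mem_cons_self
      have ih' := ih (fun a ha => h a (List.mem_cons_of_mem δ ha))
      by_cases hp : p δ = true
      · rw [List.filter_cons_of_pos hp, List.filter_cons_of_neg (by rw [hδ, hp]; simp)]
        simp only [List.length_cons]
        omega
      · have hp' : p δ = false := by simp_all
        rw [List.filter_cons_of_neg (by simp [hp']), List.filter_cons_of_pos (by rw [hδ, hp']; simp)]
        simp only [List.length_cons]
        omega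

theorem prod_filter_partition (L : List (Perm (Fin n))) (p q : Perm (Fin n) → Bool)
    (h : ∀ a ∈ L, q a = !p a)
    (hcomm : ∀ a ∈ L, ∀ b ∈ L, p a = true → q b = true → Commute a b) :
    L.prod = (L.filter p).prod * (L.filter q).prod := by
  induction L with
  | nil => simp
  | cons δ L ih =>
      have hδ := h δ List.mem_cons_self
      have ih' := ih (fun a ha => h a (List.mem_cons_of_mem δ ha))
        (fun a ha b hb hpa hqb => hcomm a (List.mem_cons_of_mem δ ha)
          b (List.mem_cons_of_mem δ hb) hpa hqb)
      by_cases hp : p δ = true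
      · rw [List.filter_cons_of_pos hp, List.filter_cons_of_neg (by rw [hδ, hp]; simp)]
        rw [List.prod_cons, List.prod_cons, ih', mul_assoc]
      · have hp' : p δ = false := by simp_all
        have hq : q δ = true := by rw [hδ, hp']; simp
        rw [List.filter_cons_of_neg (by simp [hp']), List.filter_cons_of_pos hq]
        rw [List.prod_cons, List.prod_cons, ih']
        have hcomm' : Commute δ (L.filter p).prod := by
          apply Commute.list_prod_right
          intro x hx
          have hxL := List.mem_of_mem_filter hx
          have hpx : p x = true := List.of_mem_filter hx
          exact ((hcomm x (List.mem_cons_of_mem δ hxL) δ List.mem_cons_self hpx hq)).symm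
        rw [← mul_assoc, hcomm'.eq, mul_assoc]

theorem prod_apply_eq_self {L : List (Perm (Fin n))} {y : Fin n} (h : ∀ τ ∈ L, τ y = y) :
    L.prod y = y := by
  induction L with
  | nil => simp
  | cons δ L ih =>
      rw [List.prod_cons, Perm.mul_apply, ih (fun τ hτ => h τ (List.mem_cons_of_mem δ hτ)),
        h δ List.mem_cons_self]

/-- All moved points of a 3-cycle entry lie in a single orbit. -/
theorem moved_in_orbit {L : List (Perm (Fin n))} {δ : Perm (Fin n)} (hδ3 : δ.IsThreeCycle)
    (hδL : δ ∈ L) {x z : Fin n} (hx : δ x ≠ x) (hz : δ z ≠ z) : orel {τ | τ ∈ L} x z := by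
  obtain ⟨i, hi⟩ := (hδ3.isCycle.sameCycle hx hz)
  exact ⟨δ ^ i, zpow_mem (Subgroup.subset_closure (show δ ∈ {τ | τ ∈ L} from hδL)) i, hi⟩

/-- The filtered sublist is a transitive factorization of the restriction to an orbit. -/
theorem orbit_transfact (L : List (Perm (Fin n))) (h3L : ∀ δ ∈ L, δ.IsThreeCycle) (v : Fin n) :
    IsTransFact3On (grpOrbit L v) L.prod
      (L.filter fun δ => decide (∃ x ∈ grpOrbit L v, δ x ≠ x)) := by
  set S : Set (Perm (Fin n)) := {τ | τ ∈ L} with hS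
  have hmemX : ∀ y : Fin n, y ∈ grpOrbit L v ↔ orel S v y := fun y => Iff.rfl
  set p : Perm (Fin n) → Bool := fun δ => decide (∃ x ∈ grpOrbit L v, δ x ≠ x) with hp
  have hmoved : ∀ δ ∈ L, p δ = true → ∀ z, δ z ≠ z → z ∈ grpOrbit L v := by
    intro δ hδ hpδ z hz
    rw [hp] at hpδ
    have := of_decide_eq_true hpδ
    obtain ⟨x, hxX, hxm⟩ := this
    rw [hmemX] at hxX ⊢
    exact orel_trans hxX (moved_in_orbit (h3L δ hδ) hδ hxm hz)
  have hfixed : ∀ δ ∈ L, p δ = false → ∀ z ∈ grpOrbit L v, δ z = z := by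
    intro δ hδ hpδ z hz
    by_contra hc
    have : p δ = true := by
      rw [hp]
      exact decide_eq_true ⟨z, hz, hc⟩
    rw [this] at hpδ
    exact Bool.noConfusion hpδ
  refine ⟨?_, ?_, ?_⟩
  · intro δ hδ
    have hδL := List.mem_of_mem_filter hδ
    have hpδ : p δ = true := List.of_mem_filter hδ
    exact ⟨h3L δ hδL, fun y hy => hmoved δ hδL hpδ y hy⟩
  · intro y hy
    have hpart := prod_filter_partition L p (fun δ => !p δ) (fun a _ => rfl)
      (by
        intro a ha b hb hpa hqb
        have hqb' : p b = false := by
          have hqb2 : (!p b) = true := hqb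
          simpa using hqb2
        apply Perm.Disjoint.commute
        intro z
        by_cases hza : a z = z
        · exact Or.inl hza
        · have hzX := hmoved a ha hpa z hza
          exact Or.inr (hfixed b hb hqb' z hzX))
    rw [hpart, Perm.mul_apply]
    have hfq : (L.filter (fun δ => !p δ)).prod y = y := by
      apply prod_apply_eq_self
      intro τ hτ
      have hτL := List.mem_of_mem_filter hτ
      have hqτ : (!p τ) = true := (List.mem_filter.mp hτ).2
      have hpτ : p τ = false := by simpa using hqτ
      exact hfixed τ hτL hpτ y hy
    rw [hfq]
  · intro x hx y hy
    -- transitivity on the orbit using only the filtered entries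
    have key : ∀ g ∈ Subgroup.closure S, ∀ z ∈ grpOrbit L v,
        ∃ h ∈ Subgroup.closure {τ | τ ∈ L.filter p}, h z = g z := by
      intro g hg
      induction hg using Subgroup.closure_induction with
      | mem τ hτ =>
          intro z hz
          by_cases hpτ : p τ = true
          · refine ⟨τ, Subgroup.subset_closure ?_, rfl⟩
            show τ ∈ L.filter p
            exact List.mem_filter.mpr ⟨hτ, hpτ⟩
          · have hpτ' : p τ = false := by
              rcases Bool.eq_false_or_eq_true (p τ) with h | h
              · exact absurd h hpτ
              · exact h
            refine ⟨1, one_mem _, ?_⟩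
            rw [Perm.one_apply, hfixed τ hτ hpτ' z hz]
      | one => intro z _; exact ⟨1, one_mem _, rfl⟩
      | mul a b ha hb iha ihb =>
          intro z hz
          obtain ⟨h₁, hh₁, he₁⟩ := ihb z hz
          have hbz : b z ∈ grpOrbit L v := by
            rw [hmemX] at hz ⊢
            exact orel_trans hz (orel_apply hb z)
          obtain ⟨h₂, hh₂, he₂⟩ := iha (b z) hbz
          refine ⟨h₂ * h₁, mul_mem hh₂ hh₁, ?_⟩
          rw [Perm.mul_apply, Perm.mul_apply, he₁, he₂]
      | inv a ha iha =>
          intro z hz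
          have haz : a⁻¹ z ∈ grpOrbit L v := by
            rw [hmemX] at hz ⊢
            exact orel_trans hz (orel_apply (inv_mem ha) z)
          obtain ⟨h₁, hh₁, he₁⟩ := iha (a⁻¹ z) haz
          have he₁' : h₁ (a⁻¹ z) = z := by rw [he₁]; simp
          refine ⟨h₁⁻¹, inv_mem hh₁, ?_⟩
          have hc := congrArg (fun w => h₁⁻¹ w) he₁'
          simpa using hc.symm
    rw [hmemX] at hy
    obtain ⟨g, hg, hgv⟩ := hy
    rw [hmemX] at hx
    obtain ⟨g', hg', hgv'⟩ := hx
    -- g * g'⁻¹ maps x to y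
    have hmemx : x ∈ grpOrbit L v := by rw [hmemX]; exact ⟨g', hg', hgv'⟩
    obtain ⟨h₁, hh₁, he₁⟩ := key (g * g'⁻¹) (mul_mem hg (inv_mem hg')) x hmemx
    refine ⟨h₁, hh₁, ?_⟩
    rw [he₁, Perm.mul_apply, ← hgv', show ∀ (f : Perm (Fin n)) (w : Fin n), f⁻¹ (f w) = w from fun f w => f.symm_apply_apply w, hgv]

end Assembly

section FilterHelpers

theorem filter_moved (L : List (Perm (Fin n))) (h3L : ∀ δ ∈ L, δ.IsThreeCycle) (v : Fin n)
    {δ : Perm (Fin n)} (hδL : δ ∈ L)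
    (hpδ : decide (∃ x ∈ grpOrbit L v, δ x ≠ x) = true) {z : Fin n} (hz : δ z ≠ z) :
    orel {τ | τ ∈ L} v z := by
  obtain ⟨x, hxX, hxm⟩ := of_decide_eq_true hpδ
  exact orel_trans (hxX : orel {τ | τ ∈ L} v x) (moved_in_orbit (h3L δ hδL) hδL hxm hz)

theorem filter_fixed (L : List (Perm (Fin n))) (v : Fin n) {δ : Perm (Fin n)}
    (hpδ : decide (∃ x ∈ grpOrbit L v, δ x ≠ x) = false) {z : Fin n}
    (hz : z ∈ grpOrbit L v) : δ z = z := by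
  by_contra hc
  have : decide (∃ x ∈ grpOrbit L v, δ x ≠ x) = true := decide_eq_true ⟨z, hz, hc⟩
  rw [this] at hpδ
  exact Bool.noConfusion hpδ

end FilterHelpers

end MinFact3


/-- Case (2) of Lemma 5.2: if the first factor `δ₁ = (j₃ j₂ j₁)` of a minimal transitive
factorization of `σ` into 3-cycles is such that `j₂, j₃` lie in a common cycle of `σ` and
`j₁` in a different one, then in `σ' = δ₁⁻¹σ` the points `j₁, j₂` share a cycle and `j₃`
lies in a different one; the subgroup generated by the remaining factors has exactly two
orbits, one containing `j₁` and `j₂` and the other containing `j₃`; and on each of the two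
orbits the sub-tuple of factors moving a point of that orbit is a minimal transitive
factorization of the restriction of `σ'`. -/
theorem min_threeCycle_factorization_mixed_case
    (n : ℕ) (σ ω : Perm (Fin n)) (L : List (Perm (Fin n))) (j₁ j₂ j₃ : Fin n)
    (h12 : j₁ ≠ j₂) (h13 : j₁ ≠ j₃) (h23 : j₂ ≠ j₃)
    (hω : ω = Equiv.swap j₃ j₂ * Equiv.swap j₂ j₁)
    (hmin : IsMinTransFact3 σ (ω :: L))
    (hc23 : σ.SameCycle j₂ j₃) (hc12 : ¬ σ.SameCycle j₁ j₂) :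
    ((ω⁻¹ * σ).SameCycle j₁ j₂ ∧ ¬ (ω⁻¹ * σ).SameCycle j₁ j₃ ∧
      ¬ (ω⁻¹ * σ).SameCycle j₂ j₃) ∧
    (∀ x : Fin n, x ∈ grpOrbit L j₁ ∨ x ∈ grpOrbit L j₃) ∧
    (j₂ ∈ grpOrbit L j₁ ∧ j₃ ∉ grpOrbit L j₁) ∧
    (∀ v ∈ ({j₁, j₃} : Set (Fin n)),
      IsMinTransFact3On (grpOrbit L v) (ω⁻¹ * σ)
        (L.filter fun δ => decide (∃ x ∈ grpOrbit L v, δ x ≠ x))) := by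
  classical
  obtain ⟨⟨h3all, hprodσ, htrans⟩, hminlen⟩ := hmin
  have hω3 : ω.IsThreeCycle := h3all ω List.mem_cons_self
  have h3L : ∀ δ ∈ L, δ.IsThreeCycle := fun δ hδ => h3all δ (List.mem_cons_of_mem ω hδ)
  set σ' := ω⁻¹ * σ with hσ'def
  have hLprod : L.prod = σ' := by
    rw [List.prod_cons] at hprodσ
    rw [hσ'def, ← hprodσ, inv_mul_cancel_left]
  set S : Set (Perm (Fin n)) := {τ | τ ∈ L} with hS
  -- swap decomposition of σ'
  have hσ'fac : σ' = Equiv.swap j₂ j₁ * (Equiv.swap j₃ j₂ * σ) := by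
    rw [hσ'def, hω, mul_inv_rev, Equiv.swap_inv, Equiv.swap_inv, mul_assoc]
  set τ0 := Equiv.swap j₃ j₂ * σ with hτ0
  have hstepτ : ∀ z, σ.SameCycle z (τ0 z) := by
    intro z
    have h1 : σ.SameCycle z (σ z) := ⟨1, by simp⟩
    show σ.SameCycle z (Equiv.swap j₃ j₂ (σ z))
    rcases eq_or_ne (σ z) j₃ with h3 | h3
    · rw [h3, Equiv.swap_apply_left]
      refine h1.trans ?_
      rw [h3]
      exact hc23.symm
    rcases eq_or_ne (σ z) j₂ with h2 | h2
    · rw [h2, Equiv.swap_apply_right]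
      refine h1.trans ?_
      rw [h2]
      exact hc23
    · rw [Equiv.swap_apply_of_ne_of_ne h3 h2]; exact h1
  have hnτ21 : ¬ τ0.SameCycle j₂ j₁ := by
    intro hsc
    have := MinFact3.sameCycle_imp
      ⟨fun x => Equiv.Perm.SameCycle.refl σ x, Equiv.Perm.SameCycle.symm,
        Equiv.Perm.SameCycle.trans⟩ hstepτ hsc
    exact hc12 this.symm
  have hSC12 : σ'.SameCycle j₁ j₂ := by
    rw [hσ'fac]
    exact MinFact3.sameCycle_swap_mul (Ne.symm h12) hnτ21
  have hcutτ : MinFact3.cCount τ0 = MinFact3.cCount σ + 1 :=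
    MinFact3.cCount_cut (Ne.symm h23) hc23.symm
  have hcCσ' : MinFact3.cCount σ' = MinFact3.cCount σ := by
    have := MinFact3.cCount_join (Ne.symm h12) hnτ21
    rw [← hσ'fac] at this
    omega
  have hσ'mem : σ' ∈ Subgroup.closure S := by
    rw [← hLprod]
    apply Subgroup.list_prod_mem
    intro τ hτ
    exact Subgroup.subset_closure hτ
  have hscorel : ∀ {z w : Fin n}, σ'.SameCycle z w → MinFact3.orel S z w := fun h =>
    MinFact3.sameCycle_imp (MinFact3.orel_equivalence S)
      (fun z => MinFact3.orel_apply hσ'mem z) h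
  have hj2orb : j₂ ∈ grpOrbit L j₁ := hscorel hSC12
  have hj2rel : MinFact3.orel S j₁ j₂ := hj2orb
  -- values of ω
  have hωj₁ : ω j₁ = j₃ := by
    rw [hω]
    show Equiv.swap j₃ j₂ (Equiv.swap j₂ j₁ j₁) = j₃
    rw [Equiv.swap_apply_right, Equiv.swap_apply_right]
  have hωj₂ : ω j₂ = j₁ := by
    rw [hω]
    show Equiv.swap j₃ j₂ (Equiv.swap j₂ j₁ j₂) = j₁
    rw [Equiv.swap_apply_left, Equiv.swap_apply_of_ne_of_ne h13 h12]
  have hωj₃ : ω j₃ = j₂ := by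
    rw [hω]
    show Equiv.swap j₃ j₂ (Equiv.swap j₂ j₁ j₃) = j₂
    rw [Equiv.swap_apply_of_ne_of_ne (Ne.symm h23) (Ne.symm h13), Equiv.swap_apply_left]
  have hωelse : ∀ z, z ≠ j₁ → z ≠ j₂ → z ≠ j₃ → ω z = z := by
    intro z h1 h2 h3
    rw [hω]
    show Equiv.swap j₃ j₂ (Equiv.swap j₂ j₁ z) = z
    rw [Equiv.swap_apply_of_ne_of_ne h2 h1, Equiv.swap_apply_of_ne_of_ne h3 h2]
  -- coverage of the two orbits
  have hcov : ∀ x : Fin n, MinFact3.orel S j₁ x ∨ MinFact3.orel S j₃ x := by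
    intro x
    set e : Fin n → Fin n → Prop := fun z w =>
      ((MinFact3.orel S j₁ z ∨ MinFact3.orel S j₃ z) ↔
        (MinFact3.orel S j₁ w ∨ MinFact3.orel S j₃ w)) with he_def
    have he : Equivalence e := ⟨fun _ => Iff.rfl, Iff.symm, Iff.trans⟩
    have hgen : ∀ g ∈ {τ | τ ∈ ω :: L}, ∀ z, e z (g z) := by
      intro g hg z
      rcases List.mem_cons.mp hg with rfl | hgL
      · by_cases hz1 : z = j₁
        · rw [hz1, hωj₁]
          exact iff_of_true (Or.inl (MinFact3.orel_refl S j₁))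
            (Or.inr (MinFact3.orel_refl S j₃))
        by_cases hz2 : z = j₂
        · rw [hz2, hωj₂]
          exact iff_of_true (Or.inl hj2rel) (Or.inl (MinFact3.orel_refl S j₁))
        by_cases hz3 : z = j₃
        · rw [hz3, hωj₃]
          exact iff_of_true (Or.inr (MinFact3.orel_refl S j₃)) (Or.inl hj2rel)
        · rw [hωelse z hz1 hz2 hz3]
      · have hzg : MinFact3.orel S z (g z) :=
          MinFact3.orel_apply (Subgroup.subset_closure hgL) z
        constructor
        · rintro (h | h)
          · exact Or.inl (MinFact3.orel_trans h hzg)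
          · exact Or.inr (MinFact3.orel_trans h hzg)
        · rintro (h | h)
          · exact Or.inl (MinFact3.orel_trans h (MinFact3.orel_symm hzg))
          · exact Or.inr (MinFact3.orel_trans h (MinFact3.orel_symm hzg))
    obtain ⟨g, hg, hgx⟩ := htrans j₁ x
    have hkey := MinFact3.closure_pres he hgen g hg j₁
    rw [hgx] at hkey
    exact hkey.mp (Or.inl (MinFact3.orel_refl S j₁))
  have hn3 : 3 ≤ n := by
    have h1 : ω.support.card = 3 := hω3.card_support
    have h2 : ω.support.card ≤ n := by
      have := Finset.card_le_univ ω.support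
      simpa using this
    omega
  -- the key counting step : j₃ is not in the orbit of j₁
  have hj3notin : j₃ ∉ grpOrbit L j₁ := by
    intro hj3in
    have hj3rel : MinFact3.orel S j₁ j₃ := hj3in
    have hone : MinFact3.rCount S = 1 := by
      have hsub : Subsingleton (Quotient (MinFact3.orbS S)) := by
        constructor
        intro q q'
        induction q using Quotient.ind with | _ a =>
        induction q' using Quotient.ind with | _ b =>
        apply Quotient.sound
        have ha : MinFact3.orel S j₁ a := by
          rcases hcov a with h | h
          · exact h
          · exact MinFact3.orel_trans hj3rel h
        have hb : MinFact3.orel S j₁ b := by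
          rcases hcov b with h | h
          · exact h
          · exact MinFact3.orel_trans hj3rel h
        exact MinFact3.orel_trans (MinFact3.orel_symm ha) hb
      have hne : Nonempty (Quotient (MinFact3.orbS S)) := ⟨Quotient.mk _ j₁⟩
      exact Nat.card_eq_one_iff_unique.mpr ⟨hsub, hne⟩
    have hmainL := MinFact3.main_bound L h3L
    rw [hLprod, ← hS, hone, hcCσ'] at hmainL
    have hparity := MinFact3.parity_bound (ω :: L) h3all
    rw [hprodσ] at hparity
    obtain ⟨m, hm⟩ := hparity
    have hcpos : 0 < MinFact3.cCount σ := MinFact3.cCount_pos σ (by omega)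
    have hbru := MinFact3.bridge σ Finset.univ (fun z _ => Finset.mem_univ z)
    have hunivcard : (Finset.univ : Finset (Fin n)).card = n := by simp
    obtain ⟨F, hFlen, hF3, hFprod, -, hFtrans⟩ := MinFact3.upper (m - 1) σ Finset.univ
      (fun z _ => Finset.mem_univ z) (Or.inr (by omega)) (by omega)
    have hFfact : IsTransFact3 σ F := by
      refine ⟨hF3, hFprod, ?_⟩
      intro x y
      exact hFtrans x (Finset.mem_univ x) y (Finset.mem_univ y)
    have hlenF := hminlen F hFfact
    simp only [List.length_cons] at hlenF
    omega
  have hn13 : ¬ σ'.SameCycle j₁ j₃ := fun h => hj3notin (hscorel h)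
  have hn23 : ¬ σ'.SameCycle j₂ j₃ := fun h =>
    hj3notin (MinFact3.orel_trans hj2rel (hscorel h))
  have hdisj' : ∀ {v w x : Fin n}, ¬ MinFact3.orel S v w → MinFact3.orel S v x →
      MinFact3.orel S w x → False :=
    fun hvw hvx hwx => hvw (MinFact3.orel_trans hvx (MinFact3.orel_symm hwx))
  -- the minimality of the restricted factorizations
  have minpart : ∀ v w aconn : Fin n, ¬ MinFact3.orel S v w →
      (∀ x, MinFact3.orel S v x ∨ MinFact3.orel S w x) →
      MinFact3.orel S v aconn → MinFact3.orel S w (ω aconn) →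
      ∀ M, IsTransFact3On (grpOrbit L v) σ' M →
      (L.filter fun δ => decide (∃ x ∈ grpOrbit L v, δ x ≠ x)).length ≤ M.length := by
    intro v w aconn hvw hcovvw hva hwa M hM
    by_contra hlt
    push_neg at hlt
    set pv : Perm (Fin n) → Bool := fun δ => decide (∃ x ∈ grpOrbit L v, δ x ≠ x) with hpv
    set pw : Perm (Fin n) → Bool := fun δ => decide (∃ x ∈ grpOrbit L w, δ x ≠ x) with hpw
    have hpwv : ∀ δ ∈ L, pw δ = !pv δ := by
      intro δ hδ
      have h3δ := h3L δ hδ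
      rcases Bool.eq_false_or_eq_true (pv δ) with htrue | hfalse
      · rw [htrue]
        show pw δ = false
        rw [hpw]
        apply decide_eq_false
        rintro ⟨x, hwx, hxm⟩
        exact hdisj' hvw (MinFact3.filter_moved L h3L v hδ htrue hxm) hwx
      · rw [hfalse]
        show pw δ = true
        obtain ⟨z, hzm⟩ : ∃ z, δ z ≠ z := by
          have hc3 := h3δ.card_support
          have hpos : 0 < δ.support.card := by omega
          obtain ⟨z, hz⟩ := Finset.card_pos.mp hpos
          exact ⟨z, Equiv.Perm.mem_support.mp hz⟩
        rcases hcovvw z with hvz | hwz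
        · exact absurd (MinFact3.filter_fixed L v hfalse hvz) hzm
        · rw [hpw]
          exact decide_eq_true ⟨z, hwz, hzm⟩
    set Lv := L.filter pv with hLv
    set Lw := L.filter pw with hLw
    have hlenpart : Lv.length + Lw.length = L.length :=
      MinFact3.length_filter_partition L pv pw hpwv
    have hNfact : IsTransFact3 σ (ω :: (M ++ Lw)) := by
      refine ⟨?_, ?_, ?_⟩
      · rintro δ hδ
        rcases List.mem_cons.mp hδ with rfl | hδ'
        · exact hω3
        rcases List.mem_append.mp hδ' with hM' | hLw'
        · exact (hM.1 δ hM').1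
        · exact h3L δ (List.mem_of_mem_filter hLw')
      · rw [List.prod_cons, List.prod_append]
        have hMLw : M.prod * Lw.prod = σ' := by
          apply Equiv.ext
          intro x
          rw [Equiv.Perm.mul_apply]
          rcases hcovvw x with hvx | hwx
          · have hLwx : Lw.prod x = x := by
              apply MinFact3.prod_apply_eq_self
              intro τ hτ
              by_contra hc
              exact hdisj' hvw hvx
                (MinFact3.filter_moved L h3L w (List.mem_of_mem_filter hτ)
                  ((List.mem_filter.mp hτ).2) hc)
            rw [hLwx]
            exact hM.2.1 x hvx
          · have hLwx : Lw.prod x = σ' x := by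
              have h' := (MinFact3.orbit_transfact L h3L w).2.1 x hwx
              rw [hLprod] at h'
              exact h'
            rw [hLwx]
            have hσ'x : MinFact3.orel S w (σ' x) :=
              MinFact3.orel_trans hwx (MinFact3.orel_apply hσ'mem x)
            apply MinFact3.prod_apply_eq_self
            intro τ hτ
            by_contra hc
            exact hdisj' hvw ((hM.1 τ hτ).2 _ hc) hσ'x
        rw [hMLw, hσ'def, mul_inv_cancel_left]
      · set SN : Set (Perm (Fin n)) := {τ' | τ' ∈ ω :: (M ++ Lw)} with hSN
        have hωSN : ω ∈ SN := (List.mem_cons_self : ω ∈ ω :: (M ++ Lw))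
        have hreach : ∀ x : Fin n, MinFact3.orel SN aconn x := by
          intro x
          rcases hcovvw x with hvx | hwx
          · have h' := hM.2.2 aconn hva x hvx
            refine MinFact3.orel_mono ?_ h'
            intro τ' hτ'
            exact List.mem_cons_of_mem ω (List.mem_append.mpr (Or.inl hτ'))
          · have h1 : MinFact3.orel SN aconn (ω aconn) :=
              ⟨ω, Subgroup.subset_closure hωSN, rfl⟩
            have h2 := (MinFact3.orbit_transfact L h3L w).2.2 (ω aconn) hwa x hwx
            refine MinFact3.orel_trans h1 (MinFact3.orel_mono ?_ h2)
            intro τ' hτ'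
            exact List.mem_cons_of_mem ω (List.mem_append.mpr (Or.inr hτ'))
        intro x y
        exact MinFact3.orel_trans (MinFact3.orel_symm (hreach x)) (hreach y)
    have hcontra := hminlen _ hNfact
    simp only [List.length_cons, List.length_append] at hcontra
    omega
  refine ⟨⟨hSC12, hn13, hn23⟩, ?_, ⟨hj2orb, hj3notin⟩, ?_⟩
  · intro x
    rcases hcov x with h | h
    · exact Or.inl h
    · exact Or.inr h
  · intro v hv
    rcases hv with rfl | hv3
    · refine ⟨?_, ?_⟩
      · have h' := MinFact3.orbit_transfact L h3L v
        rwa [hLprod] at h'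
      · intro M hM
        exact minpart v j₃ v (fun h => hj3notin h) hcov (MinFact3.orel_refl S v)
          (by rw [hωj₁]; exact MinFact3.orel_refl S j₃) M hM
    · have hv3' : v = j₃ := hv3
      subst hv3'
      refine ⟨?_, ?_⟩
      · have h' := MinFact3.orbit_transfact L h3L v
        rwa [hLprod] at h'
      · intro M hM
        refine minpart v j₁ v (fun h => hj3notin (MinFact3.orel_symm h))
          (fun x => (hcov x).symm) (MinFact3.orel_refl S v) ?_ M hM
        rw [hωj₃]
        exact hj2rel
end

section
/- Let (δ₁,…,δ_k) be a minimal transitive factorization of σ ∈ S_n into 3-cycles, write δ₁ = (j₃ j₂ j₁) and σ' = δ₂⋯δ_k = δ₁⁻¹σ. Suppose j₁, j₂, j₃ lie in three pairwise distinct cycles of σ. Then the subgroup generated by {δ₂,…,δ_k} still acts transitively on {1,…,n}, and j₁, j₂, j₃ all lie in one common cycle of σ'. -/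
open Equiv

/-- If `τ` agrees with `σ` on the `σ`-cycle of `j` except at `σ⁻¹ j`, where it takes
value `y`, then `j` and `y` lie in the same cycle of `τ`. -/
lemma sameCycle_of_agree_on_cycle {n : ℕ} (σ τ : Perm (Fin n)) (j y : Fin n)
    (h1 : ∀ x : Fin n, σ.SameCycle j x → σ x ≠ j → τ x = σ x)
    (h2 : τ (σ⁻¹ j) = y) : τ.SameCycle j y := by
  classical
  have hex : ∃ m, 0 < m ∧ (σ ^ m) j = j := by
    refine ⟨orderOf σ, orderOf_pos σ, ?_⟩
    rw [pow_orderOf_eq_one]; rfl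
  obtain ⟨hkpos, hkfix⟩ := Nat.find_spec hex
  have hmin : ∀ m, 0 < m → m < Nat.find hex → (σ ^ m) j ≠ j := by
    intro m hm hmk hfix
    exact (Nat.find_min hex hmk) ⟨hm, hfix⟩
  obtain ⟨l0, hl0⟩ : ∃ l, Nat.find hex = l + 1 := ⟨Nat.find hex - 1, by omega⟩
  have key : ∀ m, m ≤ l0 → (τ ^ m) j = (σ ^ m) j := by
    intro m
    induction m with
    | zero => simp
    | succ l ih =>
      intro hl
      have hl' : l ≤ l0 := by omega
      have ihv := ih hl'
      have hsc : σ.SameCycle j ((σ ^ l) j) := ⟨(l : ℤ), by rw [zpow_natCast]⟩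
      have hne : σ ((σ ^ l) j) ≠ j := by
        have h' : (σ ^ (l + 1)) j = σ ((σ ^ l) j) := by
          rw [pow_succ']; rfl
        rw [← h']
        exact hmin (l + 1) (Nat.succ_pos l) (by omega)
      calc (τ ^ (l + 1)) j = τ ((τ ^ l) j) := by rw [pow_succ']; rfl
        _ = τ ((σ ^ l) j) := by rw [ihv]
        _ = σ ((σ ^ l) j) := h1 _ hsc hne
        _ = (σ ^ (l + 1)) j := by rw [pow_succ']; rfl
  rw [hl0] at hkfix
  have hpre : (σ ^ l0) j = σ⁻¹ j := by
    have h' : σ ((σ ^ l0) j) = j := by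
      have h'' : (σ ^ (l0 + 1)) j = σ ((σ ^ l0) j) := by
        rw [pow_succ']; rfl
      rw [← h'', hkfix]
    rw [Perm.eq_inv_iff_eq]
    exact h'
  refine ⟨((l0 + 1 : ℕ) : ℤ), ?_⟩
  rw [zpow_natCast]
  have h' : (τ ^ (l0 + 1)) j = τ ((τ ^ l0) j) := by
    rw [pow_succ']; rfl
  rw [h', key l0 le_rfl, hpre, h2]

/-- Case (3) of Lemma 5.2: if the first factor `δ₁ = (j₃ j₂ j₁)` of a minimal transitive
factorization of `σ` into 3-cycles has its three points in three pairwise distinct cycles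
of `σ`, then the subgroup generated by the remaining factors still acts transitively on
`{1,…,n}` and `j₁, j₂, j₃` all lie in one common cycle of `σ' = δ₁⁻¹σ`. -/
theorem min_threeCycle_factorization_join_case
    (n : ℕ) (σ ω : Perm (Fin n)) (L : List (Perm (Fin n))) (j₁ j₂ j₃ : Fin n)
    (h12 : j₁ ≠ j₂) (h13 : j₁ ≠ j₃) (h23 : j₂ ≠ j₃)
    (hω : ω = Equiv.swap j₃ j₂ * Equiv.swap j₂ j₁)
    (hmin : IsMinTransFact3 σ (ω :: L))
    (hc12 : ¬ σ.SameCycle j₁ j₂) (hc13 : ¬ σ.SameCycle j₁ j₃)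
    (hc23 : ¬ σ.SameCycle j₂ j₃) :
    IsTransitiveFamily L ∧
    (ω⁻¹ * σ).SameCycle j₁ j₂ ∧ (ω⁻¹ * σ).SameCycle j₁ j₃ ∧
    (ω⁻¹ * σ).SameCycle j₂ j₃ := by
  classical
  have hωinv : ω⁻¹ = Equiv.swap j₂ j₁ * Equiv.swap j₃ j₂ := by
    rw [hω, mul_inv_rev, Equiv.swap_inv, Equiv.swap_inv]
  -- values of ω and ω⁻¹ on the special points
  have hω1 : ω j₁ = j₃ := by
    rw [hω, Perm.mul_apply, Equiv.swap_apply_right,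
      Equiv.swap_apply_right]
  have hω2 : ω j₂ = j₁ := by
    rw [hω, Perm.mul_apply, Equiv.swap_apply_left,
      Equiv.swap_apply_of_ne_of_ne h13 h12]
  have hω3 : ω j₃ = j₂ := by
    rw [hω, Perm.mul_apply, Equiv.swap_apply_of_ne_of_ne h23.symm h13.symm,
      Equiv.swap_apply_left]
  have hωfix : ∀ z : Fin n, z ≠ j₁ → z ≠ j₂ → z ≠ j₃ → ω z = z := by
    intro z hz1 hz2 hz3
    rw [hω, Perm.mul_apply, Equiv.swap_apply_of_ne_of_ne hz2 hz1,
      Equiv.swap_apply_of_ne_of_ne hz3 hz2]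
  have hinv1 : ω⁻¹ j₁ = j₂ := by rw [← hω2, Perm.inv_def ω, Equiv.symm_apply_apply]
  have hinv2 : ω⁻¹ j₂ = j₃ := by rw [← hω3, Perm.inv_def ω, Equiv.symm_apply_apply]
  have hinv3 : ω⁻¹ j₃ = j₁ := by rw [← hω1, Perm.inv_def ω, Equiv.symm_apply_apply]
  have hinvfix : ∀ z : Fin n, z ≠ j₁ → z ≠ j₂ → z ≠ j₃ → ω⁻¹ z = z := by
    intro z hz1 hz2 hz3
    rw [hωinv, Perm.mul_apply, Equiv.swap_apply_of_ne_of_ne hz3 hz2,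
      Equiv.swap_apply_of_ne_of_ne hz2 hz1]
  -- a generic "agreement" fact
  have hagree : ∀ x : Fin n, σ x ≠ j₁ → σ x ≠ j₂ → σ x ≠ j₃ → (ω⁻¹ * σ) x = σ x := by
    intro x hx1 hx2 hx3
    rw [Perm.mul_apply, hinvfix _ hx1 hx2 hx3]
  have hstep : ∀ x : Fin n, ∀ a : Fin n, σ x = a → (ω⁻¹ * σ) x = ω⁻¹ a := by
    intro x a hxa; rw [Perm.mul_apply, hxa]
  have happ : ∀ x : Fin n, σ.SameCycle x (σ x) := fun x => ⟨1, by rw [zpow_one]⟩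
  -- First same-cycle claim: j₁ ~ j₂ in ω⁻¹σ
  have s12 : (ω⁻¹ * σ).SameCycle j₁ j₂ := by
    apply sameCycle_of_agree_on_cycle σ (ω⁻¹ * σ) j₁ j₂
    · intro x hsc hne
      have hx2 : σ x ≠ j₂ := by
        intro h
        exact hc12 (by have := hsc.trans (happ x); rwa [h] at this)
      have hx3 : σ x ≠ j₃ := by
        intro h
        exact hc13 (by have := hsc.trans (happ x); rwa [h] at this)
      exact hagree x hne hx2 hx3
    · rw [Perm.mul_apply, Perm.inv_def σ, Equiv.apply_symm_apply, hinv1]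
  have s23 : (ω⁻¹ * σ).SameCycle j₂ j₃ := by
    apply sameCycle_of_agree_on_cycle σ (ω⁻¹ * σ) j₂ j₃
    · intro x hsc hne
      have hx1 : σ x ≠ j₁ := by
        intro h
        exact hc12 (by have := hsc.trans (happ x); rw [h] at this; exact this.symm)
      have hx3 : σ x ≠ j₃ := by
        intro h
        exact hc23 (by have := hsc.trans (happ x); rwa [h] at this)
      exact hagree x hx1 hne hx3
    · rw [Perm.mul_apply, Perm.inv_def σ, Equiv.apply_symm_apply, hinv2]
  have s31 : (ω⁻¹ * σ).SameCycle j₃ j₁ := by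
    apply sameCycle_of_agree_on_cycle σ (ω⁻¹ * σ) j₃ j₁
    · intro x hsc hne
      have hx1 : σ x ≠ j₁ := by
        intro h
        exact hc13 (by have := hsc.trans (happ x); rw [h] at this; exact this.symm)
      have hx2 : σ x ≠ j₂ := by
        intro h
        exact hc23 (by have := hsc.trans (happ x); rw [h] at this; exact this.symm)
      exact hagree x hx1 hx2 hne
    · rw [Perm.mul_apply, Perm.inv_def σ, Equiv.apply_symm_apply, hinv3]
  have s13 : (ω⁻¹ * σ).SameCycle j₁ j₃ := s31.symm
  -- Now the transitivity part
  set H := Subgroup.closure {τ | τ ∈ L} with hH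
  have hLprod : L.prod = ω⁻¹ * σ := by
    have hp : (ω :: L).prod = σ := hmin.1.2.1
    rw [List.prod_cons] at hp
    rw [eq_inv_mul_iff_mul_eq]
    exact hp
  have hσ'H : (ω⁻¹ * σ) ∈ H := by
    have : L.prod ∈ H := Subgroup.list_prod_mem H (fun τ hτ => Subgroup.subset_closure hτ)
    rwa [hLprod] at this
  set S : Subgroup (Perm (Fin n)) :=
    { carrier := {g : Perm (Fin n) | ∀ x : Fin n, ∃ h ∈ H, h x = g x}
      one_mem' := fun x => ⟨1, one_mem H, rfl⟩
      mul_mem' := by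
        intro a b ha hb x
        obtain ⟨h2, hh2, e2⟩ := hb x
        obtain ⟨h1, hh1, e1⟩ := ha (b x)
        exact ⟨h1 * h2, mul_mem hh1 hh2, by rw [Perm.mul_apply, Perm.mul_apply, e2, e1]⟩
      inv_mem' := by
        intro a ha x
        obtain ⟨h, hh, e⟩ := ha (a⁻¹ x)
        rw [Perm.inv_def a, Equiv.apply_symm_apply] at e
        refine ⟨h⁻¹, inv_mem hh, ?_⟩
        rw [Equiv.Perm.inv_eq_iff_eq]
        exact e.symm } with hS
  have hle : Subgroup.closure {τ | τ ∈ ω :: L} ≤ S := by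
    apply (Subgroup.closure_le S).mpr
    intro τ hτ
    simp only [Set.mem_setOf_eq, List.mem_cons] at hτ
    rcases hτ with heq | hτL
    · -- τ = ω
      rw [heq]
      intro x
      by_cases hx1 : x = j₁
      · subst hx1
        obtain ⟨i, hi⟩ := s13
        exact ⟨(ω⁻¹ * σ) ^ i, zpow_mem hσ'H i, by rw [hi, hω1]⟩
      by_cases hx2 : x = j₂
      · subst hx2
        obtain ⟨i, hi⟩ := s12.symm
        exact ⟨(ω⁻¹ * σ) ^ i, zpow_mem hσ'H i, by rw [hi, hω2]⟩
      by_cases hx3 : x = j₃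
      · subst hx3
        obtain ⟨i, hi⟩ := s23.symm
        exact ⟨(ω⁻¹ * σ) ^ i, zpow_mem hσ'H i, by rw [hi, hω3]⟩
      · exact ⟨1, one_mem H, by rw [hωfix x hx1 hx2 hx3]; rfl⟩
    · intro x
      exact ⟨τ, Subgroup.subset_closure hτL, rfl⟩
  refine ⟨?_, s12, s13, s23⟩
  intro x y
  obtain ⟨g, hg, hgx⟩ := hmin.1.2.2 x y
  obtain ⟨h, hh, e⟩ := hle hg x
  exact ⟨h, hh, by rw [e, hgx]⟩
end

section
/- Let (δ₁,…,δ_k) be a minimal transitive factorization of σ ∈ S_n into 3-cycles and write δ₁ = (j₃ j₂ j₁). Then it cannot happen that j₁, j₂, j₃ lie in a common cycle of σ in cyclic order j₁, j₂, j₃; that is, there is no minimal transitive factorization of σ into 3-cycles whose first factor is (j₃ j₂ j₁) with j₁, j₂, j₃ in one cycle of σ such that the least a ≥ 1 with σ^a(j₁) = j₂ is smaller than the least b ≥ 1 with σ^b(j₁) = j₃. -/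
open Equiv

/-- `x, y, z` are in cyclic order `x, y, z` in a common cycle of `σ`: the least `a ≥ 1`
with `σ^a x = y` is smaller than the least `b ≥ 1` with `σ^b x = z`. -/
def InCyclicOrder {n : ℕ} (σ : Perm (Fin n)) (x y z : Fin n) : Prop :=
  ∃ a b : ℕ, 0 < a ∧ 0 < b ∧ (σ ^ a) x = y ∧ (σ ^ b) x = z ∧
    (∀ a', 0 < a' → (σ ^ a') x = y → a ≤ a') ∧
    (∀ b', 0 < b' → (σ ^ b') x = z → b ≤ b') ∧ a < b

/-- Case (4) of Lemma 5.2 cannot happen: there is no minimal transitive factorization of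
`σ` into 3-cycles whose first factor is `(j₃ j₂ j₁)` (sending `j₃ ↦ j₂ ↦ j₁ ↦ j₃`)
with `j₁, j₂, j₃` in one common cycle of `σ` in cyclic order `j₁, j₂, j₃`. -/
theorem min_threeCycle_factorization_no_fourth_case
    (n : ℕ) (σ ω : Perm (Fin n)) (L : List (Perm (Fin n))) (j₁ j₂ j₃ : Fin n)
    (h12 : j₁ ≠ j₂) (h13 : j₁ ≠ j₃) (h23 : j₂ ≠ j₃)
    (hω : ω = Equiv.swap j₃ j₂ * Equiv.swap j₂ j₁)
    (hmin : IsMinTransFact3 σ (ω :: L))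
    (horder : InCyclicOrder σ j₁ j₂ j₃) :
    False := by
  classical
  obtain ⟨⟨h3c, hprod, htrans⟩, hminlen⟩ := hmin
  obtain ⟨a, b, ha0, hb0, hja, hjb, hamin, hbmin, hab⟩ := horder
  -- basic power juggling
  have hadd : ∀ (c d : ℕ) (x : Fin n), (σ ^ c) ((σ ^ d) x) = (σ ^ (c + d)) x := by
    intro c d x; rw [pow_add, Equiv.Perm.mul_apply]
  -- the least period ℓ of j₁ under σ
  have hex : ∃ m, 0 < m ∧ (σ ^ m) j₁ = j₁ :=
    ⟨orderOf σ, orderOf_pos σ, by rw [pow_orderOf_eq_one]; rfl⟩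
  obtain ⟨ℓ, hℓ0, hℓp, hℓmin⟩ :
      ∃ ℓ, 0 < ℓ ∧ (σ ^ ℓ) j₁ = j₁ ∧ ∀ m, 0 < m → (σ ^ m) j₁ = j₁ → ℓ ≤ m :=
    ⟨Nat.find hex, (Nat.find_spec hex).1, (Nat.find_spec hex).2,
      fun m h1 h2 => Nat.find_min' hex ⟨h1, h2⟩⟩
  have hper : ∀ (v : ℕ), (σ ^ (ℓ + v)) j₁ = (σ ^ v) j₁ := by
    intro v
    have h1 := hadd v ℓ j₁
    rw [hℓp] at h1
    rw [Nat.add_comm ℓ v, ← h1]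
  have hinj_exp : ∀ i j, i < ℓ → j < ℓ → (σ ^ i) j₁ = (σ ^ j) j₁ → i = j := by
    have key : ∀ i j, i ≤ j → j < ℓ → (σ ^ i) j₁ = (σ ^ j) j₁ → i = j := by
      intro i j hij hj he
      by_contra hne
      have h1 : 0 < j - i := by omega
      have h2 : (σ ^ (j - i)) j₁ = j₁ := by
        apply (σ ^ i).injective
        have h3 := hadd i (j - i) j₁
        have h4 : i + (j - i) = j := by omega
        rw [h3, h4, ← he]
      have := hℓmin _ h1 h2
      omega
    intro i j hi hj he
    rcases le_total i j with h | h
    · exact key i j h hj he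
    · exact (key j i h hi he.symm).symm
  -- canonical exponents: a < ℓ, b < ℓ
  have hbℓ : b < ℓ := by
    have h1 : (σ ^ (b % ℓ)) j₁ = j₃ := by
      have h2 : b = ℓ * (b / ℓ) + b % ℓ := (Nat.div_add_mod b ℓ).symm
      have h3 : ∀ q r, (σ ^ (ℓ * q + r)) j₁ = (σ ^ r) j₁ := by
        intro q
        induction q with
        | zero => simp
        | succ q ih =>
          intro r
          have h4 : ℓ * (q + 1) + r = ℓ + (ℓ * q + r) := by ring
          rw [h4, hper, ih]
      rw [h2] at hjb
      rw [← h3 (b / ℓ) (b % ℓ), ← hjb]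
    have h5 : 0 < b % ℓ := by
      rcases Nat.eq_zero_or_pos (b % ℓ) with h | h
      · exfalso; apply h13; rw [← h1, h, pow_zero]; rfl
      · exact h
    have h6 := hbmin _ h5 h1
    have h7 : b % ℓ ≤ b := Nat.mod_le b ℓ
    have h8 : b % ℓ < ℓ := Nat.mod_lt b hℓ0
    omega
  have haℓ : a < ℓ := lt_trans hab hbℓ
  have hneq : ∀ u v, u < ℓ → v < ℓ → u ≠ v → (σ ^ u) j₁ ≠ (σ ^ v) j₁ :=
    fun u v hu hv h he => h (hinj_exp u v hu hv he)
  have hj0 : (σ ^ 0) j₁ = j₁ := by rw [pow_zero]; rfl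
  -- values of ω and ω⁻¹
  have hωfix : ∀ z, z ≠ j₁ → z ≠ j₂ → z ≠ j₃ → ω z = z := by
    intro z h1 h2 h3
    rw [hω, Equiv.Perm.mul_apply, swap_apply_of_ne_of_ne h2 h1,
      swap_apply_of_ne_of_ne h3 h2]
  have hω1 : ω j₁ = j₃ := by
    rw [hω, Equiv.Perm.mul_apply, swap_apply_right, swap_apply_right]
  have hω2 : ω j₂ = j₁ := by
    rw [hω, Equiv.Perm.mul_apply, swap_apply_left,
      swap_apply_of_ne_of_ne h13 h12]
  have hω3 : ω j₃ = j₂ := by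
    rw [hω, Equiv.Perm.mul_apply, swap_apply_of_ne_of_ne (Ne.symm h23) (Ne.symm h13),
      swap_apply_left]
  have hωinv1 : ω⁻¹ j₁ = j₂ := by rw [← hω2, Equiv.Perm.coe_inv, Equiv.symm_apply_apply]
  have hωinv2 : ω⁻¹ j₂ = j₃ := by rw [← hω3, Equiv.Perm.coe_inv, Equiv.symm_apply_apply]
  have hωinv3 : ω⁻¹ j₃ = j₁ := by rw [← hω1, Equiv.Perm.coe_inv, Equiv.symm_apply_apply]
  have hωinvfix : ∀ z, z ≠ j₁ → z ≠ j₂ → z ≠ j₃ → ω⁻¹ z = z := by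
    intro z h1 h2 h3
    conv_lhs => rw [← hωfix z h1 h2 h3]
    rw [Equiv.Perm.coe_inv, Equiv.symm_apply_apply]
  -- the conjugating map f and its exponent action gc
  set gc : ℕ → ℕ := fun i => if i < a then i else if i < b then ℓ - b + i else a + i - b
    with hgcdef
  set f : Fin n → Fin n := fun x =>
      if ∃ i, a ≤ i ∧ i < b ∧ (σ ^ i) j₁ = x then (σ ^ (ℓ - b)) x
      else if ∃ i, b ≤ i ∧ i < ℓ ∧ (σ ^ i) j₁ = x then (σ ^ (a + ℓ - b)) x
      else x
    with hfdef
  have fC : ∀ i, i < ℓ → f ((σ ^ i) j₁) = (σ ^ gc i) j₁ := by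
    intro i hi
    by_cases h1 : i < a
    · have hnm : ¬ ∃ i', a ≤ i' ∧ i' < b ∧ (σ ^ i') j₁ = (σ ^ i) j₁ := by
        rintro ⟨i', hi1, hi2, he⟩
        have := hinj_exp i' i (lt_trans hi2 hbℓ) hi he
        omega
      have hnt : ¬ ∃ i', b ≤ i' ∧ i' < ℓ ∧ (σ ^ i') j₁ = (σ ^ i) j₁ := by
        rintro ⟨i', hi1, hi2, he⟩
        have := hinj_exp i' i hi2 hi he
        omega
      rw [hfdef]
      simp only
      rw [if_neg hnm, if_neg hnt, hgcdef]
      simp only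
      rw [if_pos h1]
    · by_cases h2 : i < b
      · have hm : ∃ i', a ≤ i' ∧ i' < b ∧ (σ ^ i') j₁ = (σ ^ i) j₁ := ⟨i, by omega, h2, rfl⟩
        rw [hfdef]
        simp only
        rw [if_pos hm, hadd, hgcdef]
        simp only
        rw [if_neg h1, if_pos h2]
      · have hnm : ¬ ∃ i', a ≤ i' ∧ i' < b ∧ (σ ^ i') j₁ = (σ ^ i) j₁ := by
          rintro ⟨i', hi1, hi2, he⟩
          have := hinj_exp i' i (lt_trans hi2 hbℓ) hi he
          omega
        have ht : ∃ i', b ≤ i' ∧ i' < ℓ ∧ (σ ^ i') j₁ = (σ ^ i) j₁ := ⟨i, by omega, hi, rfl⟩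
        rw [hfdef]
        simp only
        rw [if_neg hnm, if_pos ht, hadd, hgcdef]
        simp only
        rw [if_neg h1, if_neg h2]
        have h3 : a + ℓ - b + i = ℓ + (a + i - b) := by omega
        rw [h3, hper]
  have fO : ∀ x, (¬ ∃ i, i < ℓ ∧ (σ ^ i) j₁ = x) → f x = x := by
    intro x hx
    have hnm : ¬ ∃ i', a ≤ i' ∧ i' < b ∧ (σ ^ i') j₁ = x := by
      rintro ⟨i', _, hi2, he⟩
      exact hx ⟨i', lt_trans hi2 hbℓ, he⟩
    have hnt : ¬ ∃ i', b ≤ i' ∧ i' < ℓ ∧ (σ ^ i') j₁ = x := by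
      rintro ⟨i', _, hi2, he⟩
      exact hx ⟨i', hi2, he⟩
    rw [hfdef]
    simp only
    rw [if_neg hnm, if_neg hnt]
  have hgclt : ∀ i, i < ℓ → gc i < ℓ := by
    intro i hi
    rw [hgcdef]
    simp only
    split_ifs <;> omega
  have hgcinj : ∀ i j, i < ℓ → j < ℓ → gc i = gc j → i = j := by
    intro i j hi hj
    rw [hgcdef]
    simp only
    split_ifs <;> omega
  have hfinj : Function.Injective f := by
    intro x y hxy
    by_cases hx : ∃ i, i < ℓ ∧ (σ ^ i) j₁ = x
    · obtain ⟨i, hi, rfl⟩ := hx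
      by_cases hy : ∃ i', i' < ℓ ∧ (σ ^ i') j₁ = y
      · obtain ⟨i', hi', rfl⟩ := hy
        rw [fC i hi, fC i' hi'] at hxy
        have := hinj_exp _ _ (hgclt i hi) (hgclt i' hi') hxy
        rw [hgcinj i i' hi hi' this]
      · rw [fC i hi, fO y hy] at hxy
        exact (hy ⟨gc i, hgclt i hi, hxy⟩).elim
    · by_cases hy : ∃ i', i' < ℓ ∧ (σ ^ i') j₁ = y
      · obtain ⟨i', hi', rfl⟩ := hy
        rw [fO x hx, fC i' hi'] at hxy
        exact (hx ⟨gc i', hgclt i' hi', hxy.symm⟩).elim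
      · rw [fO x hx, fO y hy] at hxy
        exact hxy
  set ρ : Perm (Fin n) := Equiv.ofBijective f (Finite.injective_iff_bijective.mp hfinj)
    with hρdef
  have hρ : ∀ x, ρ x = f x := fun x => rfl
  -- σ x in the orbit implies x in the orbit
  have hCsig : ∀ x : Fin n, (∃ i, i < ℓ ∧ (σ ^ i) j₁ = σ x) → (∃ i, i < ℓ ∧ (σ ^ i) j₁ = x) := by
    rintro x ⟨i, hi, he⟩
    refine ⟨(ℓ - 1 + i) % ℓ, Nat.mod_lt _ hℓ0, ?_⟩
    apply σ.injective
    have h1 : (σ ^ ((ℓ - 1 + i) % ℓ)) j₁ = (σ ^ (ℓ - 1 + i)) j₁ := by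
      have h2 : ℓ - 1 + i = ℓ * ((ℓ - 1 + i) / ℓ) + (ℓ - 1 + i) % ℓ :=
        (Nat.div_add_mod _ ℓ).symm
      have h3 : ∀ q r, (σ ^ (ℓ * q + r)) j₁ = (σ ^ r) j₁ := by
        intro q
        induction q with
        | zero => simp
        | succ q ih =>
          intro r
          have h4 : ℓ * (q + 1) + r = ℓ + (ℓ * q + r) := by ring
          rw [h4, hper, ih]
      conv_rhs => rw [h2, h3]
    rw [h1]
    have h5 : σ ((σ ^ (ℓ - 1 + i)) j₁) = (σ ^ (1 + (ℓ - 1 + i))) j₁ := by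
      have := hadd 1 (ℓ - 1 + i) j₁
      rwa [pow_one] at this
    rw [h5]
    have h6 : 1 + (ℓ - 1 + i) = ℓ + i := by omega
    rw [h6, hper, he]
  have hstep : ∀ (m : ℕ), σ ((σ ^ m) j₁) = (σ ^ (m + 1)) j₁ := by
    intro m
    have := hadd 1 m j₁
    rwa [pow_one, Nat.add_comm 1 m] at this
  have hexp_eq : ∀ u v : ℕ, u = ℓ + v → (σ ^ u) j₁ = (σ ^ v) j₁ := by
    intro u v h; rw [h, hper]
  have hexp_congr : ∀ u v : ℕ, u = v → (σ ^ u) j₁ = (σ ^ v) j₁ := by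
    intro u v h; rw [h]
  -- the key commuting relation
  have hcomm : ∀ x : Fin n, ρ (ω⁻¹ (σ x)) = σ (ρ x) := by
    intro x
    by_cases hx : ∃ i, i < ℓ ∧ (σ ^ i) j₁ = x
    · obtain ⟨i, hi, rfl⟩ := hx
      rw [hρ, hρ, fC i hi, hstep (gc i)]
      by_cases hiℓ : i + 1 = ℓ
      · -- σ x = j₁, ω⁻¹ j₁ = j₂
        have h1 : σ ((σ ^ i) j₁) = j₁ := by rw [hstep, hiℓ, hℓp]
        rw [h1, hωinv1, ← hja, fC a haℓ]
        have h2 : gc a = ℓ - b + a := by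
          rw [hgcdef]; simp only
          rw [if_neg (by omega), if_pos hab]
        have h3 : gc i = a + i - b := by
          rw [hgcdef]; simp only
          rw [if_neg (by omega), if_neg (by omega)]
        rw [h2, h3]
        apply hexp_congr
        omega
      · by_cases hia : i + 1 = a
        · -- σ x = j₂, ω⁻¹ j₂ = j₃
          have h1 : σ ((σ ^ i) j₁) = j₂ := by rw [hstep, hia, hja]
          rw [h1, hωinv2, ← hjb, fC b hbℓ]
          have h2 : gc b = a := by
            rw [hgcdef]; simp only
            rw [if_neg (by omega), if_neg (by omega)]
            omega
          have h3 : gc i = i := by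
            rw [hgcdef]; simp only
            rw [if_pos (by omega)]
          rw [h2, h3]
          apply hexp_congr
          omega
        · by_cases hib : i + 1 = b
          · -- σ x = j₃, ω⁻¹ j₃ = j₁
            have h1 : σ ((σ ^ i) j₁) = j₃ := by rw [hstep, hib, hjb]
            rw [h1, hωinv3, ← hj0, fC 0 hℓ0]
            have h2 : gc 0 = 0 := by
              rw [hgcdef]; simp only
              rw [if_pos ha0]
            have h3 : gc i = ℓ - b + i := by
              rw [hgcdef]; simp only
              rw [if_neg (by omega), if_pos (by omega)]
            rw [h2, h3]
            symm
            apply hexp_eq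
            omega
          · -- generic point: ω⁻¹ fixes σ x
            have hi1 : i + 1 < ℓ := by omega
            have h1 : σ ((σ ^ i) j₁) = (σ ^ (i + 1)) j₁ := hstep i
            have hne1 : (σ ^ (i + 1)) j₁ ≠ j₁ := by
              rw [← hj0]; exact hneq _ _ hi1 hℓ0 (by omega)
            have hne2 : (σ ^ (i + 1)) j₁ ≠ j₂ := by
              rw [← hja]; exact hneq _ _ hi1 haℓ (by omega)
            have hne3 : (σ ^ (i + 1)) j₁ ≠ j₃ := by
              rw [← hjb]; exact hneq _ _ hi1 hbℓ (by omega)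
            rw [h1, hωinvfix _ hne1 hne2 hne3, fC (i + 1) hi1]
            have h2 : gc (i + 1) = gc i + 1 := by
              rw [hgcdef]; simp only
              split_ifs <;> omega
            rw [h2]
    · have hsx : ¬ ∃ i, i < ℓ ∧ (σ ^ i) j₁ = σ x := fun h => hx (hCsig x h)
      have hne1 : σ x ≠ j₁ := by
        intro h; exact hsx ⟨0, hℓ0, by rw [hj0, h]⟩
      have hne2 : σ x ≠ j₂ := by
        intro h; exact hsx ⟨a, haℓ, by rw [hja, h]⟩
      have hne3 : σ x ≠ j₃ := by
        intro h; exact hsx ⟨b, hbℓ, by rw [hjb, h]⟩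
      rw [hωinvfix _ hne1 hne2 hne3, hρ, hρ, fO _ hsx, fO _ hx]
  -- conjugation: ρ * (ω⁻¹ * σ) * ρ⁻¹ = σ
  have hρσ : ρ * (ω⁻¹ * σ) = σ * ρ :=
    Equiv.ext fun x => by simpa [Equiv.Perm.mul_apply] using hcomm x
  have hLprod : L.prod = ω⁻¹ * σ := by
    rw [List.prod_cons] at hprod
    rw [← hprod, ← mul_assoc, inv_mul_cancel, one_mul]
  have hconj : ρ * L.prod * ρ⁻¹ = σ := by
    rw [hLprod, mul_assoc, ← mul_assoc, hρσ, mul_assoc, mul_inv_cancel, mul_one]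
  have hσ'def : ω⁻¹ * σ = ρ⁻¹ * σ * ρ := by
    rw [mul_assoc, ← hρσ, ← mul_assoc, inv_mul_cancel, one_mul]
  have hσ'pow : ∀ (m : ℕ) (x : Fin n), ((ω⁻¹ * σ) ^ m) x = ρ⁻¹ ((σ ^ m) (ρ x)) := by
    intro m x
    have h1 : (ρ⁻¹ * σ * ρ) ^ m = ρ⁻¹ * σ ^ m * ρ := by
      have := conj_pow (a := ρ⁻¹) (b := σ) (i := m)
      rwa [inv_inv] at this
    rw [hσ'def, h1, Equiv.Perm.mul_apply, Equiv.Perm.mul_apply]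
  -- values of ρ at the special points
  have hρj₁ : ρ j₁ = j₁ := by
    have h1 := fC 0 hℓ0
    have h2 : gc 0 = 0 := by
      rw [hgcdef]; simp only
      rw [if_pos ha0]
    rw [hj0, h2, hj0] at h1
    rw [hρ, h1]
  have hρj₂ : ρ j₂ = (σ ^ (ℓ - b + a)) j₁ := by
    have h1 := fC a haℓ
    have h2 : gc a = ℓ - b + a := by
      rw [hgcdef]; simp only
      rw [if_neg (by omega), if_pos hab]
    rw [hja, h2] at h1
    rw [hρ, h1]
  have hρj₃ : ρ j₃ = j₂ := by
    have h1 := fC b hbℓ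
    have h2 : gc b = a := by
      rw [hgcdef]; simp only
      rw [if_neg (by omega), if_neg (by omega)]
      omega
    rw [hjb, h2, hja] at h1
    rw [hρ, h1]
  -- j₃ and j₂ are in the ⟨σ'⟩-orbit of j₁
  have horb₃ : ((ω⁻¹ * σ) ^ a) j₁ = j₃ := by
    rw [hσ'pow, hρj₁, hja, ← hρj₃, Equiv.Perm.coe_inv, Equiv.symm_apply_apply]
  have horb₂ : ((ω⁻¹ * σ) ^ (ℓ - b + a)) j₁ = j₂ := by
    rw [hσ'pow, hρj₁, ← hρj₂, Equiv.Perm.coe_inv, Equiv.symm_apply_apply]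
  -- the tail L already generates a transitive subgroup
  have hσ'K : ω⁻¹ * σ ∈ Subgroup.closure {τ | τ ∈ L} := by
    rw [← hLprod]
    exact list_prod_mem fun x hx => Subgroup.subset_closure hx
  have hmain : ∀ g ∈ Subgroup.closure {τ | τ ∈ ω :: L}, ∀ x : Fin n,
      ∃ h ∈ Subgroup.closure {τ | τ ∈ L}, h x = g x := by
    intro g hg
    induction hg using Subgroup.closure_induction with
    | mem τ hτ =>
      intro x
      rcases List.mem_cons.mp hτ with h | h
      · rw [h]
        by_cases hx1 : x = j₁
        · subst hx1
          exact ⟨(ω⁻¹ * σ) ^ a, pow_mem hσ'K a, by rw [horb₃, hω1]⟩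
        · by_cases hx2 : x = j₂
          · subst hx2
            refine ⟨((ω⁻¹ * σ) ^ (ℓ - b + a))⁻¹, inv_mem (pow_mem hσ'K _), ?_⟩
            rw [hω2, ← horb₂, Equiv.Perm.coe_inv, Equiv.symm_apply_apply]
          · by_cases hx3 : x = j₃
            · subst hx3
              refine ⟨(ω⁻¹ * σ) ^ (ℓ - b + a) * ((ω⁻¹ * σ) ^ a)⁻¹,
                mul_mem (pow_mem hσ'K _) (inv_mem (pow_mem hσ'K _)), ?_⟩
              rw [hω3, Equiv.Perm.mul_apply, ← horb₃, Equiv.Perm.coe_inv, Equiv.symm_apply_apply, horb₂]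
            · exact ⟨1, one_mem _, by rw [hωfix x hx1 hx2 hx3, Equiv.Perm.one_apply]⟩
      · exact ⟨τ, Subgroup.subset_closure h, rfl⟩
    | one => exact fun x => ⟨1, one_mem _, rfl⟩
    | mul g1 g2 hg1 hg2 p1 p2 =>
      intro x
      obtain ⟨h₂, hk2, e2⟩ := p2 x
      obtain ⟨h₁, hk1, e1⟩ := p1 (g2 x)
      exact ⟨h₁ * h₂, mul_mem hk1 hk2, by
        rw [Equiv.Perm.mul_apply, Equiv.Perm.mul_apply, e2, e1]⟩
    | inv g hgm p =>
      intro x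
      obtain ⟨h, hk, e⟩ := p (g⁻¹ x)
      have h1 : h (g⁻¹ x) = x := by rw [e, Equiv.Perm.coe_inv, Equiv.apply_symm_apply]
      refine ⟨h⁻¹, inv_mem hk, ?_⟩
      conv_lhs => rw [← h1]
      rw [Equiv.Perm.coe_inv, Equiv.symm_apply_apply]
  have hLtrans : IsTransitiveFamily L := by
    intro x y
    obtain ⟨g, hg, hgx⟩ := htrans x y
    obtain ⟨h, hK, he⟩ := hmain g hg x
    exact ⟨h, hK, by rw [he, hgx]⟩
  -- conjugate the factorization
  have hmaplemma : ∀ M : List (Perm (Fin n)),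
      (M.map fun δ => ρ * δ * ρ⁻¹).prod = ρ * M.prod * ρ⁻¹ := by
    intro M
    induction M with
    | nil => simp
    | cons d t ih =>
      rw [List.map_cons, List.prod_cons, List.prod_cons, ih]
      group
  have hfact : IsTransFact3 σ (L.map fun δ => ρ * δ * ρ⁻¹) := by
    refine ⟨?_, ?_, ?_⟩
    · intro δ hδ
      rw [List.mem_map] at hδ
      obtain ⟨τ, hτ, rfl⟩ := hδ
      have h3 := h3c τ (List.mem_cons_of_mem _ hτ)
      show _ = _
      rw [Equiv.Perm.cycleType_conj]
      exact h3
    · rw [hmaplemma, hconj]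
    · intro x y
      obtain ⟨g, hK, he⟩ := hLtrans (ρ⁻¹ x) (ρ⁻¹ y)
      refine ⟨ρ * g * ρ⁻¹, ?_, ?_⟩
      · have h1 : ρ * g * ρ⁻¹ ∈
            (Subgroup.closure {τ | τ ∈ L}).map (MulAut.conj ρ).toMonoidHom :=
          ⟨g, hK, rfl⟩
        rw [MonoidHom.map_closure] at h1
        refine Subgroup.closure_mono ?_ h1
        rintro _ ⟨τ, hτ, rfl⟩
        simpa using List.mem_map_of_mem (f := fun δ => ρ * δ * ρ⁻¹) hτ
      · rw [Equiv.Perm.mul_apply, Equiv.Perm.mul_apply, he, Equiv.Perm.coe_inv, Equiv.apply_symm_apply]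
  have hlen := hminlen _ hfact
  rw [List.length_map, List.length_cons] at hlen
  omega
end
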